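/- arXiv:1710.00402 — 4 statements merged into one kernel-verified Lean document; each statement's English description precedes it below -/
import Mathlib

section
/- Let P be a simplicial poset, let w, y ∈ P, and let q be a positive integer. Then in the face ring A_P, the identity (wy)^q = (w ∧ y)^q · Σ_{z ∈ M(w,y)} z^q holds, where M(w,y) is the set of minimal upper bounds of w and y. In particular, if z₁ ≠ z₂ are distinct elements of M(w,y), then z₁ z₂ = 0 in A_P. -/
open scoped Classical
open MvPolynomial

noncomputable section

def IsSimplicialPoset (P : Type*) [Fintype P] [PartialOrder P] [OrderBot P] : Prop :=
  ∀ y : P, ∃ m : ℕ, Nonempty (Set.Icc (⊥ : P) y ≃o Finset (Fin m))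

def MUB {P : Type*} [PartialOrder P] (w y : P) : Set P :=
  {z | z ∈ upperBounds {w, y} ∧ ∀ z' ∈ upperBounds {w, y}, z' ≤ z → z' = z}

variable (P : Type) [Fintype P] [PartialOrder P] [OrderBot P]
variable (k : Type) [Field k]

/-- The defining ideal of the face ring of a simplicial poset. -/
def faceIdeal : Ideal (MvPolynomial P k) :=
  Ideal.span
    ({f | ∃ w y : P, upperBounds {w, y} = ∅ ∧ f = X w * X y} ∪
     {f | ∃ w y m : P, (upperBounds {w, y}).Nonempty ∧ IsGLB {w, y} m ∧
        f = X w * X y - X m * ∑ z ∈ (Set.toFinite (MUB w y)).toFinset, X z} ∪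
     {X (⊥ : P) - 1})

/-- The face ring `A_P = k[P]/I_P` of a simplicial poset. -/
abbrev FaceRing := MvPolynomial P k ⧸ faceIdeal P k

/-- The class of the variable corresponding to a face `y` in the face ring. -/
def fv (y : P) : FaceRing P k := Ideal.Quotient.mk _ (X y)

/-- `r` is a standard monomial with leading variable `z`: a product of powers of
variables along a strictly decreasing chain starting at `z`, with positive exponents. -/
def IsStdMonLead (r : FaceRing P k) (z : P) : Prop :=
  ∃ (c : ℕ) (w : Fin (c + 1) → P) (p : Fin (c + 1) → ℕ),
    StrictAnti w ∧ (∀ i, 0 < p i) ∧ w 0 = z ∧ r = ∏ i, (fv P k (w i)) ^ (p i)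

lemma MUB_no_common_ub {P : Type} [Fintype P] [PartialOrder P] [OrderBot P]
    (hP : IsSimplicialPoset P) {w y z₁ z₂ : P}
    (h1 : z₁ ∈ MUB w y) (h2 : z₂ ∈ MUB w y) (hne : z₁ ≠ z₂) :
    upperBounds ({z₁, z₂} : Set P) = ∅ := by
  by_contra h
  obtain ⟨u, hu⟩ := Set.nonempty_iff_ne_empty.mpr h
  obtain ⟨m₀, ⟨e⟩⟩ := hP u
  have hz1u : z₁ ≤ u := hu (by simp)
  have hz2u : z₂ ≤ u := hu (by simp)
  have hw1 : w ≤ z₁ := h1.1 (by simp)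
  have hy1 : y ≤ z₁ := h1.1 (by simp)
  have hw2 : w ≤ z₂ := h2.1 (by simp)
  have hy2 : y ≤ z₂ := h2.1 (by simp)
  set Z₁ : Set.Icc (⊥ : P) u := ⟨z₁, bot_le, hz1u⟩
  set Z₂ : Set.Icc (⊥ : P) u := ⟨z₂, bot_le, hz2u⟩
  set W : Set.Icc (⊥ : P) u := ⟨w, bot_le, le_trans hw1 hz1u⟩
  set Y : Set.Icc (⊥ : P) u := ⟨y, bot_le, le_trans hy1 hz1u⟩
  set A : Set.Icc (⊥ : P) u := e.symm (e Z₁ ⊓ e Z₂)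
  have heA : e A = e Z₁ ⊓ e Z₂ := e.apply_symm_apply _
  have hA1 : A ≤ Z₁ := e.le_iff_le.mp (by rw [heA]; exact inf_le_left)
  have hA2 : A ≤ Z₂ := e.le_iff_le.mp (by rw [heA]; exact inf_le_right)
  have hWA : W ≤ A := e.le_iff_le.mp (by
    rw [heA]
    exact le_inf (e.le_iff_le.mpr (Subtype.mk_le_mk.mpr hw1))
      (e.le_iff_le.mpr (Subtype.mk_le_mk.mpr hw2)))
  have hYA : Y ≤ A := e.le_iff_le.mp (by
    rw [heA]
    exact le_inf (e.le_iff_le.mpr (Subtype.mk_le_mk.mpr hy1))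
      (e.le_iff_le.mpr (Subtype.mk_le_mk.mpr hy2)))
  have hAub : (A : P) ∈ upperBounds ({w, y} : Set P) := by
    rintro a ha
    rcases ha with rfl | ha
    · exact hWA
    · rw [Set.mem_singleton_iff] at ha; subst ha; exact hYA
  have e1 : (A : P) = z₁ := h1.2 _ hAub hA1
  have e2 : (A : P) = z₂ := h2.2 _ hAub hA2
  exact hne (e1 ▸ e2)

lemma add_pow_of_mul_eq_zero {R : Type*} [CommRing R] {a b : R} (h : a * b = 0)
    (q : ℕ) (hq : 0 < q) : (a + b) ^ q = a ^ q + b ^ q := by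
  obtain ⟨n, rfl⟩ := Nat.exists_eq_add_of_lt hq
  clear hq
  induction n with
  | zero => simp
  | succ n ih =>
      have : (a + b) ^ (0 + (n + 1) + 1) = (a + b) ^ (0 + n + 1) * (a + b) := by
        ring
      rw [this, ih]
      have h1 : a ^ (0 + n + 1) * b = 0 := by
        have : a ^ (0 + n + 1) * b = a ^ (0 + n) * (a * b) := by ring
        rw [this, h, mul_zero]
      have h2 : b ^ (0 + n + 1) * a = 0 := by
        have : b ^ (0 + n + 1) * a = b ^ (0 + n) * (a * b) := by ring
        rw [this, h, mul_zero]
      have expand : (a ^ (0 + n + 1) + b ^ (0 + n + 1)) * (a + b) =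
          a ^ (0 + n + 1 + 1) + b ^ (0 + n + 1 + 1)
          + (a ^ (0 + n + 1) * b + b ^ (0 + n + 1) * a) := by ring
      rw [expand, h1, h2]
      ring_nf

lemma sum_pow_of_pairwise_mul_eq_zero {R : Type*} [CommRing R] {ι : Type*}
    (s : Finset ι) (f : ι → R)
    (h : ∀ i ∈ s, ∀ j ∈ s, i ≠ j → f i * f j = 0)
    (q : ℕ) (hq : 0 < q) : (∑ i ∈ s, f i) ^ q = ∑ i ∈ s, (f i) ^ q := by
  induction s using Finset.cons_induction with
  | empty => simp [zero_pow hq.ne']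
  | cons a s ha ih =>
      rw [Finset.sum_cons, Finset.sum_cons]
      have hmul : f a * (∑ i ∈ s, f i) = 0 := by
        rw [Finset.mul_sum]
        refine Finset.sum_eq_zero fun i hi => ?_
        exact h a (Finset.mem_cons_self _ _) i (Finset.mem_cons_of_mem hi)
          (fun hai => ha (hai ▸ hi))
      rw [add_pow_of_mul_eq_zero hmul q hq,
        ih (fun i hi j hj hij => h i (Finset.mem_cons_of_mem hi) j
          (Finset.mem_cons_of_mem hj) hij)]

/-- Lemma 2.4 ("freshman's dream"): in the face ring of a simplicial poset,
`(wy)^q = (w ∧ y)^q · Σ_{z ∈ M(w,y)} z^q`; in particular distinct minimal upper bounds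
multiply to zero. -/
theorem faceRing_pow_identity
    (hP : IsSimplicialPoset P) (w y m : P)
    (hub : (upperBounds {w, y}).Nonempty) (hm : IsGLB {w, y} m) (q : ℕ) (hq : 0 < q) :
    ((fv P k w * fv P k y) ^ q =
      (fv P k m) ^ q * ∑ z ∈ (Set.toFinite (MUB w y)).toFinset, (fv P k z) ^ q) ∧
    (∀ z₁ z₂ : P, z₁ ∈ MUB w y → z₂ ∈ MUB w y → z₁ ≠ z₂ →
      fv P k z₁ * fv P k z₂ = 0) := by
  have hzero : ∀ z₁ z₂ : P, z₁ ∈ MUB w y → z₂ ∈ MUB w y → z₁ ≠ z₂ →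
      fv P k z₁ * fv P k z₂ = 0 := by
    intro z₁ z₂ h1 h2 hne
    have hub0 : upperBounds ({z₁, z₂} : Set P) = ∅ := MUB_no_common_ub hP h1 h2 hne
    have hmem : (X z₁ * X z₂ : MvPolynomial P k) ∈ faceIdeal P k :=
      Ideal.subset_span (Or.inl (Or.inl ⟨z₁, z₂, hub0, rfl⟩))
    have : fv P k z₁ * fv P k z₂ =
        Ideal.Quotient.mk (faceIdeal P k) (X z₁ * X z₂) := by
      simp [fv, map_mul]
    rw [this, Ideal.Quotient.eq_zero_iff_mem]
    exact hmem
  refine ⟨?_, hzero⟩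
  -- the defining relation
  have hrel : fv P k w * fv P k y =
      fv P k m * ∑ z ∈ (Set.toFinite (MUB w y)).toFinset, fv P k z := by
    have hmem : (X w * X y - X m * ∑ z ∈ (Set.toFinite (MUB w y)).toFinset, X z :
        MvPolynomial P k) ∈ faceIdeal P k :=
      Ideal.subset_span (Or.inl (Or.inr ⟨w, y, m, hub, hm, rfl⟩))
    simp only [fv]
    rw [← map_mul, ← map_sum, ← map_mul]
    exact Ideal.Quotient.eq.mpr hmem
  have hpair : ∀ i ∈ (Set.toFinite (MUB w y)).toFinset,
      ∀ j ∈ (Set.toFinite (MUB w y)).toFinset, i ≠ j → fv P k i * fv P k j = 0 := by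
    intro i hi j hj hij
    exact hzero i j ((Set.Finite.mem_toFinset _).mp hi)
      ((Set.Finite.mem_toFinset _).mp hj) hij
  calc (fv P k w * fv P k y) ^ q
      = (fv P k m * ∑ z ∈ (Set.toFinite (MUB w y)).toFinset, fv P k z) ^ q := by rw [hrel]
    _ = (fv P k m) ^ q * (∑ z ∈ (Set.toFinite (MUB w y)).toFinset, fv P k z) ^ q := by
        rw [mul_pow]
    _ = (fv P k m) ^ q * ∑ z ∈ (Set.toFinite (MUB w y)).toFinset, (fv P k z) ^ q := by
        rw [sum_pow_of_pairwise_mul_eq_zero _ _ hpair q hq]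

end
end

section
/- Let P be a simplicial poset and let m = ∏_{i=1}^k y_i^{p_i} be a standard monomial in the face ring A_P with y₁ ≻ y₂ ≻ ⋯ ≻ y_k, and let ℓ be a positive integer and x_j an atom of P. Then x_j^ℓ · m can be written in A_P as a sum Σ_{z ∈ M(x_j, y₁)} m_z, where each m_z is a standard monomial whose leading variable is z. In particular, if x_j and y₁ have no common upper bound, then x_j^ℓ · m = 0. -/
open scoped Classical
open MvPolynomial

noncomputable section

variable (P : Type) [Fintype P] [PartialOrder P] [OrderBot P]
variable (k : Type) [Field k]

section Aux
variable {P k}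

lemma mem_ub_pair {w y z : P} : z ∈ upperBounds ({w, y} : Set P) ↔ w ≤ z ∧ y ≤ z := by
  constructor
  · intro h
    exact ⟨h (by simp), h (by simp)⟩
  · rintro ⟨h1, h2⟩ a ha
    rcases ha with rfl | ha
    · exact h1
    · simpa using ha ▸ h2

lemma fv_bot : fv P k ⊥ = 1 := by
  have : Ideal.Quotient.mk (faceIdeal P k) (X (⊥ : P) - 1) = 0 := by
    apply Ideal.Quotient.eq_zero_iff_mem.mpr
    exact Ideal.subset_span (Or.inr rfl)
  have h2 : fv P k ⊥ - 1 = 0 := by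
    rw [fv, ← map_one (Ideal.Quotient.mk (faceIdeal P k)), ← map_sub]
    exact this
  linear_combination h2

lemma fv_mul_eq_zero {w y : P} (h : upperBounds ({w, y} : Set P) = ∅) :
    fv P k w * fv P k y = 0 := by
  have : Ideal.Quotient.mk (faceIdeal P k) (X w * X y) = 0 := by
    apply Ideal.Quotient.eq_zero_iff_mem.mpr
    exact Ideal.subset_span (Or.inl (Or.inl ⟨w, y, h, rfl⟩))
  rw [fv, fv, ← map_mul]
  exact this

lemma fv_mul_eq {w y m : P} (h : (upperBounds ({w, y} : Set P)).Nonempty)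
    (hm : IsGLB ({w, y} : Set P) m) :
    fv P k w * fv P k y = fv P k m * ∑ z ∈ (Set.toFinite (MUB w y)).toFinset, fv P k z := by
  have : Ideal.Quotient.mk (faceIdeal P k)
      (X w * X y - X m * ∑ z ∈ (Set.toFinite (MUB w y)).toFinset, X z) = 0 := by
    apply Ideal.Quotient.eq_zero_iff_mem.mpr
    exact Ideal.subset_span (Or.inl (Or.inr ⟨w, y, m, h, hm, rfl⟩))
  rw [map_sub, map_mul, map_mul, map_sum] at this
  exact sub_eq_zero.mp this

lemma isGLB_pair_self {x y : P} (h : x ≤ y) : IsGLB ({x, y} : Set P) x := by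
  constructor
  · intro a ha
    rcases ha with rfl | ha
    · exact le_refl a
    · simp at ha; subst ha; exact h
  · intro b hb
    exact hb (by simp)

lemma isGLB_pair_bot {x y : P} (hx : IsAtom x) (h : ¬ x ≤ y) : IsGLB ({x, y} : Set P) ⊥ := by
  constructor
  · intro a ha; exact bot_le
  · intro b hb
    have hbx : b ≤ x := hb (by simp)
    have hby : b ≤ y := hb (by simp)
    rcases lt_or_eq_of_le hbx with hlt | rfl
    · exact le_of_eq (hx.2 b hlt)
    · exact absurd hby h

lemma MUB_of_le {x y : P} (h : x ≤ y) : MUB x y = {y} := by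
  ext z
  simp only [MUB, Set.mem_setOf_eq, Set.mem_singleton_iff]
  constructor
  · rintro ⟨hz, hmin⟩
    exact (hmin y (mem_ub_pair.mpr ⟨h, le_refl y⟩) (mem_ub_pair.mp hz).2).symm
  · rintro rfl
    refine ⟨mem_ub_pair.mpr ⟨h, le_refl z⟩, fun z' hz' hle => ?_⟩
    exact le_antisymm hle (mem_ub_pair.mp hz').2

lemma MUB_toFinset_of_le {x y : P} (h : x ≤ y) :
    (Set.toFinite (MUB x y)).toFinset = {y} := by
  ext z
  rw [Set.Finite.mem_toFinset, MUB_of_le h]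
  simp

lemma MUB_empty {x y : P} (h : upperBounds ({x, y} : Set P) = ∅) :
    (Set.toFinite (MUB x y)).toFinset = ∅ := by
  ext z
  rw [Set.Finite.mem_toFinset]
  simp only [Finset.notMem_empty, iff_false]
  intro hz
  have : z ∈ upperBounds ({x, y} : Set P) := hz.1
  rw [h] at this
  exact this

/-- Key consequence of simpliciality: below a common upper bound `u` of `x` and `y`
there is a unique minimal upper bound of `x` and `y`. -/
lemma mub_le (hP : IsSimplicialPoset P) {x y u : P} (hx : x ≤ u) (hy : y ≤ u) :
    ∃ z, z ∈ MUB x y ∧ z ≤ u ∧ ∀ z' ∈ MUB x y, z' ≤ u → z' = z := by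
  obtain ⟨m, ⟨φ⟩⟩ := hP u
  set xI : Set.Icc (⊥ : P) u := ⟨x, bot_le, hx⟩ with hxI
  set yI : Set.Icc (⊥ : P) u := ⟨y, bot_le, hy⟩ with hyI
  set zI : Set.Icc (⊥ : P) u := φ.symm (φ xI ∪ φ yI) with hzI
  have hxz : x ≤ (zI : P) := by
    have : xI ≤ zI := φ.le_symm_apply.mpr Finset.subset_union_left
    exact this
  have hyz : y ≤ (zI : P) := by
    have : yI ≤ zI := φ.le_symm_apply.mpr Finset.subset_union_right
    exact this
  have hmin : ∀ z' ∈ upperBounds ({x, y} : Set P), z' ≤ u → (zI : P) ≤ z' := by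
    intro z' hz' hz'u
    obtain ⟨hxz', hyz'⟩ := mem_ub_pair.mp hz'
    set z'I : Set.Icc (⊥ : P) u := ⟨z', bot_le, hz'u⟩ with hz'I
    have h1 : φ xI ⊆ φ z'I := φ.le_iff_le.mpr (by exact hxz')
    have h2 : φ yI ⊆ φ z'I := φ.le_iff_le.mpr (by exact hyz')
    have : zI ≤ z'I := φ.symm_apply_le.mpr (Finset.union_subset h1 h2)
    exact this
  refine ⟨(zI : P), ⟨mem_ub_pair.mpr ⟨hxz, hyz⟩, ?_⟩, zI.2.2, ?_⟩
  · intro z' hz' hle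
    exact le_antisymm hle (hmin z' hz' (le_trans hle zI.2.2))
  · intro z' hz' hz'u
    have h1 : (zI : P) ≤ z' := hmin z' hz'.1 hz'u
    exact (hz'.2 _ (mem_ub_pair.mpr ⟨hxz, hyz⟩) h1).symm

lemma strictAnti_cons {n : ℕ} {u : P} {w : Fin (n + 1) → P}
    (hw : StrictAnti w) (h : w 0 < u) : StrictAnti (Fin.cons u w : Fin (n + 2) → P) := by
  intro i j hij
  induction j using Fin.cases with
  | zero => exact absurd hij (Fin.not_lt_zero i)
  | succ j' =>
    induction i using Fin.cases with
    | zero =>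
      simp only [Fin.cons_zero, Fin.cons_succ]
      exact lt_of_le_of_lt (hw.antitone (Fin.zero_le j')) h
    | succ i' =>
      simp only [Fin.cons_succ]
      exact hw (by rwa [← Fin.succ_lt_succ_iff])

lemma prod_std {c : ℕ} {y : Fin (c + 1) → P} {p : Fin (c + 1) → ℕ}
    (hy : StrictAnti y) (hp : ∀ i, 0 < p i) :
    IsStdMonLead P k (∏ i, (fv P k (y i)) ^ (p i)) (y 0) :=
  ⟨c, y, p, hy, hp, rfl, rfl⟩

/-- Merging a power of the leading variable into a standard monomial. -/
lemma IsStdMonLead.lead_pow_mul {r : FaceRing P k} {z : P}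
    (h : IsStdMonLead P k r z) (a : ℕ) : IsStdMonLead P k ((fv P k z) ^ a * r) z := by
  obtain ⟨c, w, q, hw, hq, hw0, rfl⟩ := h
  refine ⟨c, w, Function.update q 0 (q 0 + a), hw, ?_, hw0, ?_⟩
  · intro i
    rcases eq_or_ne i 0 with rfl | hne
    · rw [Function.update_self]
      exact Nat.lt_of_lt_of_le (hq 0) (Nat.le_add_right _ _)
    · simpa [Function.update_of_ne hne] using hq i
  · rw [Fin.prod_univ_succ, Fin.prod_univ_succ]
    have h1 : ∀ i : Fin c, Function.update q 0 (q 0 + a) i.succ = q i.succ := by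
      intro i; exact Function.update_of_ne (Fin.succ_ne_zero i) _ _
    simp only [Function.update_self, h1, hw0, pow_add]
    ring

/-- Prepending a strictly larger variable to a standard monomial. -/
lemma IsStdMonLead.cons_mul {r : FaceRing P k} {z u : P} {a : ℕ}
    (h : IsStdMonLead P k r z) (hzu : z < u) (ha : 0 < a) :
    IsStdMonLead P k ((fv P k u) ^ a * r) u := by
  obtain ⟨c, w, q, hw, hq, hw0, rfl⟩ := h
  refine ⟨c + 1, Fin.cons u w, Fin.cons a q, strictAnti_cons hw (hw0 ▸ hzu), ?_, rfl, ?_⟩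
  · intro i
    refine Fin.cases ?_ (fun i' => ?_) i
    · rw [Fin.cons_zero]; exact ha
    · rw [Fin.cons_succ]; exact hq _
  · conv_rhs => rw [Fin.prod_univ_succ]
    simp only [Fin.cons_zero, Fin.cons_succ]

lemma IsStdMonLead.absorb {r : FaceRing P k} {z u : P} {a : ℕ}
    (h : IsStdMonLead P k r z) (hzu : z ≤ u) (ha : 0 < a) :
    IsStdMonLead P k ((fv P k u) ^ a * r) u := by
  rcases lt_or_eq_of_le hzu with hlt | rfl
  · exact h.cons_mul hlt ha
  · exact h.lead_pow_mul a

lemma fv_pow_std {z : P} {a : ℕ} (ha : 0 < a) :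
    IsStdMonLead P k ((fv P k z) ^ a) z := by
  refine ⟨0, fun _ => z, fun _ => a, ?_, fun _ => ha, rfl, ?_⟩
  · intro i j hij
    exact absurd hij (by omega)
  · rw [Fin.prod_univ_one]

/-- If the leading variable is killed by `fv u`, the whole product dies. -/
lemma IsStdMonLead.kill {r : FaceRing P k} {z u : P} {a : ℕ}
    (h : IsStdMonLead P k r z) (h0 : fv P k u * fv P k z = 0) (ha : 0 < a) :
    (fv P k u) ^ a * r = 0 := by
  obtain ⟨c, w, q, hw, hq, hw0, rfl⟩ := h
  obtain ⟨a', rfl⟩ : ∃ a', a = a' + 1 := ⟨a - 1, by have := ha; omega⟩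
  obtain ⟨b, hb⟩ : ∃ b, q 0 = b + 1 := ⟨q 0 - 1, by have := hq 0; omega⟩
  rw [Fin.prod_univ_succ, hw0, hb]
  have : (fv P k u) ^ (a' + 1) * ((fv P k z) ^ (b + 1) * ∏ i : Fin c, (fv P k (w i.succ)) ^ (q i.succ))
      = (fv P k u * fv P k z) * ((fv P k u) ^ a' * (fv P k z) ^ b * ∏ i : Fin c, (fv P k (w i.succ)) ^ (q i.succ)) := by
    ring
  rw [this, h0, zero_mul]

lemma strictAnti_tail {c : ℕ} {y : Fin (c + 1 + 1) → P} (hy : StrictAnti y) :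
    StrictAnti (fun i : Fin (c + 1) => y i.succ) :=
  fun _ _ hij => hy (Fin.succ_lt_succ_iff.mpr hij)

variable (k)

lemma tail_reduce_std {c : ℕ} {y : Fin (c + 1) → P} {p : Fin (c + 1) → ℕ}
    (hy : StrictAnti y) (hp : ∀ i, 0 < p i) {z : P} (hz : y 0 < z) :
    IsStdMonLead P k ((fv P k z) ^ 1 *
      ((fv P k (y 0)) ^ (p 0 - 1) * ∏ i : Fin c, (fv P k (y i.succ)) ^ (p i.succ))) z := by
  cases c with
  | zero =>
    rcases Nat.eq_zero_or_pos (p 0 - 1) with h0 | h0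
    · have he : (fv P k z) ^ 1 *
          ((fv P k (y 0)) ^ (p 0 - 1) * ∏ i : Fin 0, (fv P k (y i.succ)) ^ (p i.succ)) =
          (fv P k z) ^ 1 := by
        rw [h0]; simp
      rw [he]; exact fv_pow_std one_pos
    · have he : (fv P k z) ^ 1 *
          ((fv P k (y 0)) ^ (p 0 - 1) * ∏ i : Fin 0, (fv P k (y i.succ)) ^ (p i.succ)) =
          (fv P k z) ^ 1 * ((fv P k (y 0)) ^ (p 0 - 1)) := by
        simp
      rw [he]; exact (fv_pow_std h0).cons_mul hz one_pos
  | succ c' =>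
    have htail : IsStdMonLead P k (∏ i : Fin (c' + 1), (fv P k (y i.succ)) ^ (p i.succ))
        (y (Fin.succ 0)) := prod_std (strictAnti_tail hy) (fun i => hp i.succ)
    have hy10 : y (Fin.succ 0) < y 0 := hy (Fin.succ_pos 0)
    rcases Nat.eq_zero_or_pos (p 0 - 1) with h0 | h0
    · rw [h0, pow_zero, one_mul]
      exact htail.cons_mul (lt_trans hy10 hz) one_pos
    · exact (htail.absorb hy10.le h0).cons_mul hz one_pos

lemma one_mul_std_not_le {c : ℕ} (x : P) (hx : IsAtom x) (y : Fin (c + 1) → P)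
    (p : Fin (c + 1) → ℕ) (hy : StrictAnti y) (hp : ∀ i, 0 < p i) (hnle : ¬ x ≤ y 0) :
    ∃ g : P → FaceRing P k,
      fv P k x * ∏ i, (fv P k (y i)) ^ (p i) =
        ∑ z ∈ (Set.toFinite (MUB x (y 0))).toFinset, g z ∧
      ∀ z ∈ MUB x (y 0), IsStdMonLead P k (g z) z := by
  have hb : p 0 = (p 0 - 1) + 1 := by have := hp 0; omega
  by_cases hub : (upperBounds ({x, y 0} : Set P)).Nonempty
  · have key : fv P k x * fv P k (y 0) =
        ∑ z ∈ (Set.toFinite (MUB x (y 0))).toFinset, fv P k z := by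
      have := fv_mul_eq (k := k) hub (isGLB_pair_bot hx hnle)
      rwa [fv_bot, one_mul] at this
    refine ⟨fun z => (fv P k z) ^ 1 *
      ((fv P k (y 0)) ^ (p 0 - 1) * ∏ i : Fin c, (fv P k (y i.succ)) ^ (p i.succ)), ?_, ?_⟩
    · calc fv P k x * ∏ i, (fv P k (y i)) ^ (p i)
          = (fv P k x * fv P k (y 0)) *
            ((fv P k (y 0)) ^ (p 0 - 1) * ∏ i : Fin c, (fv P k (y i.succ)) ^ (p i.succ)) := by
            rw [Fin.prod_univ_succ]
            conv_lhs => rw [hb]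
            rw [pow_succ]
            ring
        _ = ∑ z ∈ (Set.toFinite (MUB x (y 0))).toFinset, fv P k z *
            ((fv P k (y 0)) ^ (p 0 - 1) * ∏ i : Fin c, (fv P k (y i.succ)) ^ (p i.succ)) := by
            rw [key, Finset.sum_mul]
        _ = _ := by
            refine Finset.sum_congr rfl fun z _ => ?_
            simp only [pow_one]
    · intro z hz
      have hz1 : y 0 ≤ z := (mem_ub_pair.mp hz.1).2
      have hzx : x ≤ z := (mem_ub_pair.mp hz.1).1
      have hne : y 0 ≠ z := by
        rintro rfl
        exact hnle hzx
      exact tail_reduce_std k hy hp (lt_of_le_of_ne hz1 hne)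
  · rw [Set.not_nonempty_iff_eq_empty] at hub
    refine ⟨fun _ => 0, ?_, ?_⟩
    · rw [MUB_empty hub, Finset.sum_empty]
      have h0 : fv P k x * fv P k (y 0) = 0 := fv_mul_eq_zero hub
      have hstd : IsStdMonLead P k (∏ i, (fv P k (y i)) ^ (p i)) (y 0) := prod_std hy hp
      have := hstd.kill h0 one_pos
      rwa [pow_one] at this
    · intro z hz
      exact absurd (hub ▸ hz.1) (Set.notMem_empty z)

lemma one_mul_std (hP : IsSimplicialPoset P) :
    ∀ (c : ℕ) (x : P), IsAtom x → ∀ (y : Fin (c + 1) → P) (p : Fin (c + 1) → ℕ),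
      StrictAnti y → (∀ i, 0 < p i) →
      ∃ g : P → FaceRing P k,
        fv P k x * ∏ i, (fv P k (y i)) ^ (p i) =
          ∑ z ∈ (Set.toFinite (MUB x (y 0))).toFinset, g z ∧
        ∀ z ∈ MUB x (y 0), IsStdMonLead P k (g z) z := by
  intro c
  induction c with
  | zero =>
    intro x hx y p hy hp
    by_cases hle : x ≤ y 0
    · refine ⟨fun _ => fv P k x * ∏ i, (fv P k (y i)) ^ (p i),
        by rw [MUB_toFinset_of_le hle, Finset.sum_singleton], ?_⟩
      intro z hz
      rw [MUB_of_le hle, Set.mem_singleton_iff] at hz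
      subst hz
      have he : fv P k x * ∏ i, (fv P k (y i)) ^ (p i) =
          (fv P k (y 0)) ^ (p 0) * (fv P k x) ^ 1 := by
        rw [Fin.prod_univ_one, pow_one]; ring
      rw [he]
      exact (fv_pow_std one_pos).absorb hle (hp 0)
    · exact one_mul_std_not_le k x hx y p hy hp hle
  | succ c' ih =>
    intro x hx y p hy hp
    by_cases hle : x ≤ y 0
    · rcases eq_or_lt_of_le hle with heq | hlt
      · -- x = y 0
        refine ⟨fun _ => fv P k x * ∏ i, (fv P k (y i)) ^ (p i),
          by rw [MUB_toFinset_of_le hle, Finset.sum_singleton], ?_⟩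
        intro z hz
        rw [MUB_of_le hle, Set.mem_singleton_iff] at hz
        subst hz
        have he : fv P k x * ∏ i, (fv P k (y i)) ^ (p i) =
            (fv P k (y 0)) ^ 1 * ∏ i, (fv P k (y i)) ^ (p i) := by
          rw [heq, pow_one]
        rw [he]
        exact (prod_std hy hp).lead_pow_mul 1
      · -- x < y 0
        have hy1lt : y (Fin.succ 0) < y 0 := hy (Fin.succ_pos 0)
        obtain ⟨g', hg'eq, hg'std⟩ := ih x hx (fun i => y i.succ) (fun i => p i.succ)
          (strictAnti_tail hy) (fun i => hp i.succ)
        obtain ⟨zs, hzsM, hzsle, huniq⟩ := mub_le hP hle hy1lt.le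
        have hzsF : zs ∈ (Set.toFinite (MUB x (y (Fin.succ 0)))).toFinset :=
          (Set.Finite.mem_toFinset _).mpr hzsM
        have hmain : fv P k x * ∏ i, (fv P k (y i)) ^ (p i) =
            (fv P k (y 0)) ^ (p 0) * g' zs := by
          calc fv P k x * ∏ i, (fv P k (y i)) ^ (p i)
              = (fv P k (y 0)) ^ (p 0) *
                (fv P k x * ∏ i : Fin (c' + 1), (fv P k (y i.succ)) ^ (p i.succ)) := by
                rw [Fin.prod_univ_succ]; ring
            _ = (fv P k (y 0)) ^ (p 0) *
                ∑ z ∈ (Set.toFinite (MUB x (y (Fin.succ 0)))).toFinset, g' z := by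
                rw [hg'eq]
            _ = ∑ z ∈ (Set.toFinite (MUB x (y (Fin.succ 0)))).toFinset,
                (fv P k (y 0)) ^ (p 0) * g' z := by rw [Finset.mul_sum]
            _ = (fv P k (y 0)) ^ (p 0) * g' zs := by
                refine Finset.sum_eq_single_of_mem zs hzsF fun b hb hne => ?_
                have hbM : b ∈ MUB x (y (Fin.succ 0)) := (Set.Finite.mem_toFinset _).mp hb
                have hub0 : upperBounds ({y 0, b} : Set P) = ∅ := by
                  by_contra hcon
                  rw [← Ne, ← Set.nonempty_iff_ne_empty] at hcon
                  obtain ⟨u, hu⟩ := hcon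
                  obtain ⟨hy0u, hbu⟩ := mem_ub_pair.mp hu
                  obtain ⟨w, hwM, hwle, huw⟩ := mub_le hP (le_trans hle hy0u)
                    (le_trans hy1lt.le hy0u)
                  exact hne ((huw b hbM hbu).trans (huw zs hzsM (le_trans hzsle hy0u)).symm)
                exact (hg'std b hbM).kill (fv_mul_eq_zero hub0) (hp 0)
        refine ⟨fun _ => fv P k x * ∏ i, (fv P k (y i)) ^ (p i),
          by rw [MUB_toFinset_of_le hle, Finset.sum_singleton], ?_⟩
        intro z hz
        rw [MUB_of_le hle, Set.mem_singleton_iff] at hz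
        subst hz
        rw [hmain]
        exact (hg'std zs hzsM).absorb hzsle (hp 0)
    · exact one_mul_std_not_le k x hx y p hy hp hle

lemma pow_mul_std (hP : IsSimplicialPoset P) :
    ∀ (ℓ : ℕ), 0 < ℓ → ∀ (c : ℕ) (x : P), IsAtom x →
      ∀ (y : Fin (c + 1) → P) (p : Fin (c + 1) → ℕ),
      StrictAnti y → (∀ i, 0 < p i) →
      ∃ g : P → FaceRing P k,
        (fv P k x) ^ ℓ * ∏ i, (fv P k (y i)) ^ (p i) =
          ∑ z ∈ (Set.toFinite (MUB x (y 0))).toFinset, g z ∧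
        ∀ z ∈ MUB x (y 0), IsStdMonLead P k (g z) z := by
  intro ℓ
  induction ℓ with
  | zero => intro h; exact absurd h (lt_irrefl 0)
  | succ n ih =>
    intro _ c x hx y p hy hp
    obtain ⟨g, h1, h2⟩ := one_mul_std k hP c x hx y p hy hp
    rcases Nat.eq_zero_or_pos n with rfl | hn
    · exact ⟨g, by rw [pow_one]; exact h1, h2⟩
    · refine ⟨fun z => (fv P k x) ^ n * g z, ?_, ?_⟩
      · calc (fv P k x) ^ (n + 1) * ∏ i, (fv P k (y i)) ^ (p i)
            = (fv P k x) ^ n * (fv P k x * ∏ i, (fv P k (y i)) ^ (p i)) := by ring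
          _ = (fv P k x) ^ n * ∑ z ∈ (Set.toFinite (MUB x (y 0))).toFinset, g z := by rw [h1]
          _ = _ := by rw [Finset.mul_sum]
      · intro z hz
        have hxz : x ≤ z := (mem_ub_pair.mp hz.1).1
        obtain ⟨d, w, q, hw, hq, hw0, heq⟩ := h2 z hz
        obtain ⟨h, hh1, hh2⟩ := ih hn d x hx w q hw hq
        have hM : (Set.toFinite (MUB x (w 0))).toFinset = {z} := by
          rw [hw0]; exact MUB_toFinset_of_le hxz
        have hzM : z ∈ MUB x (w 0) := by
          rw [hw0, MUB_of_le hxz]; exact Set.mem_singleton z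
        have he : (fv P k x) ^ n * g z = h z := by
          rw [heq, hh1, hM, Finset.sum_singleton]
        show IsStdMonLead P k ((fv P k x) ^ n * g z) z
        rw [he]
        exact hh2 z hzM


end Aux

/-- Lemma 2.5: multiplying a standard monomial `m = ∏ y_i^{p_i}` (with
`y_0 ≻ y_1 ≻ ⋯`) by a power `x_j^ℓ` of an atom yields a sum of standard monomials
`Σ_{z ∈ M(x_j, y_0)} m_z` with leading variables the minimal upper bounds of `x_j`
and the leading variable `y_0`; in particular the product vanishes when `x_j` and `y_0`
have no common upper bound. -/
theorem atom_pow_mul_standard_monomial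
    (hP : IsSimplicialPoset P) (xj : P) (hxj : IsAtom xj) (ℓ : ℕ) (hℓ : 0 < ℓ)
    (c : ℕ) (y : Fin (c + 1) → P) (p : Fin (c + 1) → ℕ)
    (hy : StrictAnti y) (hp : ∀ i, 0 < p i) :
    (∃ g : P → FaceRing P k,
      (fv P k xj) ^ ℓ * ∏ i, (fv P k (y i)) ^ (p i) =
        ∑ z ∈ (Set.toFinite (MUB xj (y 0))).toFinset, g z ∧
      ∀ z ∈ MUB xj (y 0), IsStdMonLead P k (g z) z) ∧
    (upperBounds {xj, y 0} = ∅ →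
      (fv P k xj) ^ ℓ * ∏ i, (fv P k (y i)) ^ (p i) = 0) := by
  obtain ⟨g, h1, h2⟩ := pow_mul_std k hP ℓ hℓ c xj hxj y p hy hp
  refine ⟨⟨g, h1, h2⟩, fun hub => ?_⟩
  rw [h1, MUB_empty hub, Finset.sum_empty]

end
end

section
/- Let P be a simplicial poset with atoms x₁, ..., xₙ, and let δ = (δ₁, ..., δₙ) ∈ ℤ_{≥0}ⁿ be a vector whose support {i : δᵢ > 0} equals supp(y) for some y ∈ P. Then there exists a standard monomial m in the face ring A_P with leading variable y and ℤⁿ-degree exactly δ. Explicitly, setting p₀ = min{δᵢ : δᵢ > 0}, and iteratively p_j = min{δᵢ : δᵢ > p_{j-1}} with S_j = {i : δᵢ ≥ p_j}, the monomial m = y^{p₀} ∏_{j=1}^ℓ y_{S_j}^{p_j − p_{j-1}} (where y_S denotes the unique face below y with support S) is standard of degree δ. -/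
open scoped Classical
open MvPolynomial

noncomputable section

variable (P : Type) [Fintype P] [PartialOrder P] [OrderBot P]
variable (k : Type) [Field k]

/-- Given a vector `δ ∈ ℤ_{≥0}ⁿ` of exponents whose support equals the support of a face
`y` (the set of indices of atoms below `y`), there is a standard monomial in the face ring
with leading variable `y` and ℤⁿ-degree exactly `δ`.  The monomial is recorded by its
chain `w : Fin (c+1) → P` (strictly decreasing, starting at `y`) and positive exponents
`p`; its degree at the atom `x i` is `Σ_a (if x i ≤ w a then p a else 0)`. -/
theorem exists_standard_monomial_of_degree
    (hP : IsSimplicialPoset P) (n : ℕ) (x : Fin n → P)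
    (hinj : Function.Injective x) (hatom : ∀ i, IsAtom (x i))
    (hsurj : ∀ a : P, IsAtom a → ∃ i, x i = a)
    (y : P) (hy : y ≠ ⊥) (δ : Fin n → ℕ) (hδ : ∀ i, 0 < δ i ↔ x i ≤ y) :
    ∃ (c : ℕ) (w : Fin (c + 1) → P) (p : Fin (c + 1) → ℕ),
      StrictAnti w ∧ (∀ i, 0 < p i) ∧ w 0 = y ∧
      (IsStdMonLead P k (∏ i, (fv P k (w i)) ^ (p i)) y) ∧
      ∀ i : Fin n, (∑ a, if x i ≤ w a then p a else 0) = δ i := by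
  classical
  obtain ⟨m, ⟨φ⟩⟩ := hP y
  set bE : Set.Icc (⊥ : P) y := ⟨⊥, le_rfl, bot_le⟩ with hbE
  set yE : Set.Icc (⊥ : P) y := ⟨y, bot_le, le_rfl⟩ with hyE
  have hφbot : φ bE = ∅ := by
    have h1 : bE ≤ φ.symm ∅ := by exact bot_le (α := P)
    have := φ.monotone h1
    rw [φ.apply_symm_apply] at this
    exact Finset.subset_empty.mp this
  have hφtop : φ yE = Finset.univ := by
    refine Finset.eq_univ_of_forall fun u => ?_
    have h1 : φ.symm Finset.univ ≤ yE := (φ.symm Finset.univ).2.2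
    have := φ.monotone h1
    rw [φ.apply_symm_apply] at this
    exact this (Finset.mem_univ u)
  -- e i : the singleton corresponding to atom x i (when x i ≤ y)
  set e : Fin n → Finset (Fin m) := fun i => if h : x i ≤ y then φ ⟨x i, bot_le, h⟩ else ∅
    with he
  have hsing : ∀ i, x i ≤ y → ∃ u, e i = {u} := by
    intro i hi
    have hne : (φ ⟨x i, bot_le, hi⟩).Nonempty := by
      rw [Finset.nonempty_iff_ne_empty]
      intro h
      have : (⟨x i, bot_le, hi⟩ : Set.Icc (⊥ : P) y) = bE := φ.injective (h.trans hφbot.symm)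
      exact (hatom i).1 (congrArg Subtype.val this)
    obtain ⟨u, hu⟩ := hne
    refine ⟨u, ?_⟩
    rw [he]; simp only [dif_pos hi]
    by_contra hne2
    have hss : ({u} : Finset (Fin m)) < φ ⟨x i, bot_le, hi⟩ :=
      lt_of_le_of_ne (Finset.singleton_subset_iff.mpr hu) (Ne.symm hne2)
    have hlt : φ.symm {u} < (⟨x i, bot_le, hi⟩ : Set.Icc (⊥ : P) y) := by
      have := φ.symm.strictMono hss
      rwa [φ.symm_apply_apply] at this
    have hltv : (φ.symm {u} : Set.Icc (⊥:P) y).val < x i := hlt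
    have := (hatom i).2 _ hltv
    have hbeq : φ.symm ({u} : Finset (Fin m)) = bE := Subtype.ext this
    have : ({u} : Finset (Fin m)) = ∅ := by
      rw [← hφbot, ← hbeq, φ.apply_symm_apply]
    simp at this
  have heinj : ∀ i j, x i ≤ y → x j ≤ y → e i = e j → i = j := by
    intro i j hi hj hij
    rw [he] at hij; simp only [dif_pos hi, dif_pos hj] at hij
    have := φ.injective hij
    exact hinj (congrArg Subtype.val this)
  have hatomOf : ∀ u : Fin m, ∃ i, x i ≤ y ∧ e i = {u} := by
    intro u
    set z := φ.symm ({u} : Finset (Fin m)) with hz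
    have hzne : (z : P) ≠ ⊥ := by
      intro h
      have : z = bE := Subtype.ext h
      have : ({u} : Finset (Fin m)) = ∅ := by rw [← hφbot, ← this, hz, φ.apply_symm_apply]
      simp at this
    have hzatom : IsAtom (z : P) := by
      refine ⟨hzne, fun b hb => ?_⟩
      have hbmem : b ∈ Set.Icc (⊥ : P) y := ⟨bot_le, le_of_lt (hb.trans_le z.2.2)⟩
      have hlt : (⟨b, hbmem⟩ : Set.Icc (⊥:P) y) < z := hb
      have := φ.strictMono hlt
      rw [hz, φ.apply_symm_apply] at this
      have hempty : φ ⟨b, hbmem⟩ = ∅ := by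
        rw [Finset.lt_iff_ssubset, Finset.ssubset_singleton_iff] at this
        exact this
      have : (⟨b, hbmem⟩ : Set.Icc (⊥:P) y) = bE := φ.injective (hempty.trans hφbot.symm)
      exact congrArg Subtype.val this
    obtain ⟨i, hix⟩ := hsurj _ hzatom
    have hiy : x i ≤ y := hix ▸ z.2.2
    refine ⟨i, hiy, ?_⟩
    rw [he]; simp only [dif_pos hiy]
    have : (⟨x i, bot_le, hiy⟩ : Set.Icc (⊥:P) y) = z := Subtype.ext hix
    rw [this, hz, φ.apply_symm_apply]
  -- the B-sets
  set B : ℕ → Finset (Fin m) :=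
    fun t => (Finset.univ.filter (fun i => t ≤ δ i)).biUnion e with hB
  have hkey : ∀ i, x i ≤ y → ∀ t, 0 < t → (e i ⊆ B t ↔ t ≤ δ i) := by
    intro i hi t ht
    constructor
    · intro hsub
      obtain ⟨u, hu⟩ := hsing i hi
      have hmem : u ∈ B t := hsub (hu ▸ Finset.mem_singleton_self u)
      rw [hB] at hmem
      simp only [Finset.mem_biUnion, Finset.mem_filter, Finset.mem_univ, true_and] at hmem
      obtain ⟨j, hjt, hju⟩ := hmem
      have hjy : x j ≤ y := (hδ j).mp (lt_of_lt_of_le ht hjt)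
      obtain ⟨u', hu'⟩ := hsing j hjy
      have : u = u' := by rw [hu'] at hju; simpa using hju
      have : e i = e j := by rw [hu, hu', this]
      exact heinj i j hi hjy this ▸ hjt
    · intro hti
      exact Finset.subset_biUnion_of_mem e (by simp [hti])
  -- the value set V
  set V : Finset ℕ := (Finset.univ.filter (fun i => x i ≤ y)).image δ with hV
  have hVpos : ∀ t ∈ V, 0 < t := by
    intro t htV
    rw [hV] at htV
    simp only [Finset.mem_image, Finset.mem_filter, Finset.mem_univ, true_and] at htV
    obtain ⟨i, hi, rfl⟩ := htV
    exact (hδ i).mpr hi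
  have hmemV : ∀ i, x i ≤ y → δ i ∈ V := by
    intro i hi; rw [hV]; exact Finset.mem_image_of_mem δ (by simp [hi])
  have hVne : V.Nonempty := by
    have huniv : (Finset.univ : Finset (Fin m)).Nonempty := by
      rw [Finset.nonempty_iff_ne_empty]
      intro h
      have : φ yE = φ bE := by rw [hφbot, hφtop, h]
      exact hy (congrArg Subtype.val (φ.injective this))
    obtain ⟨u, _⟩ := huniv
    obtain ⟨i, hi, -⟩ := hatomOf u
    exact ⟨δ i, hmemV i hi⟩
  set c : ℕ := V.card - 1 with hc
  have hcard : V.card = c + 1 := (Nat.succ_pred_eq_of_pos hVne.card_pos).symm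
  set v : Fin (c + 1) ≃o {t // t ∈ V} := V.orderIsoOfFin hcard with hv
  set vv : Fin (c + 1) → ℕ := fun a => (v a : ℕ) with hvv
  have hvvmono : StrictMono vv := fun a b hab => v.strictMono hab
  have hvvmem : ∀ a, vv a ∈ V := fun a => (v a).2
  have hvvsurj : ∀ t ∈ V, ∃ a, vv a = t := fun t ht =>
    ⟨v.symm ⟨t, ht⟩, by rw [hvv]; simp⟩
  -- the chain
  set w : Fin (c + 1) → P := fun a => (φ.symm (B (vv a)) : Set.Icc (⊥:P) y).val with hw
  have hwley : ∀ a, w a ≤ y := fun a => (φ.symm (B (vv a))).2.2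
  have hxw : ∀ i, x i ≤ y → ∀ a, (x i ≤ w a ↔ vv a ≤ δ i) := by
    intro i hi a
    have h1 : x i ≤ w a ↔ e i ⊆ B (vv a) := by
      rw [hw]
      constructor
      · intro h
        have h2 : (⟨x i, bot_le, hi⟩ : Set.Icc (⊥:P) y) ≤ φ.symm (B (vv a)) := h
        have := φ.monotone h2
        rw [φ.apply_symm_apply] at this
        rw [he]; simpa only [dif_pos hi] using this
      · intro h
        have h2 : φ ⟨x i, bot_le, hi⟩ ≤ B (vv a) := by
          rw [he] at h; simpa only [dif_pos hi] using h
        have := φ.symm.monotone h2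
        rw [φ.symm_apply_apply] at this
        exact this
    rw [h1, hkey i hi _ (hVpos _ (hvvmem a))]
  have hanti : StrictAnti w := by
    intro a b hab
    have hBsub : B (vv b) ⊆ B (vv a) := by
      rw [hB]
      apply Finset.biUnion_subset_biUnion_of_subset_left
      intro j hj
      simp only [Finset.mem_filter, Finset.mem_univ, true_and] at hj ⊢
      exact le_trans (le_of_lt (hvvmono hab)) hj
    have hle : w b ≤ w a := φ.symm.monotone hBsub
    obtain ⟨i, hi, hdi⟩ : ∃ i, x i ≤ y ∧ δ i = vv a := by
      have := hvvmem a
      rw [hV] at this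
      simp only [Finset.mem_image, Finset.mem_filter, Finset.mem_univ, true_and] at this
      obtain ⟨i, hi, hd⟩ := this
      exact ⟨i, hi, hd⟩
    have hia : x i ≤ w a := (hxw i hi a).mpr (le_of_eq hdi.symm)
    have hib : ¬ x i ≤ w b := by
      rw [hxw i hi b]
      rw [hdi]
      exact not_le.mpr (hvvmono hab)
    refine lt_of_le_of_ne hle fun h => hib (h ▸ hia)
  have hw0 : w 0 = y := by
    have hBfull : B (vv 0) = Finset.univ := by
      refine Finset.eq_univ_of_forall fun u => ?_
      obtain ⟨i, hi, hei⟩ := hatomOf u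
      have hδV := hmemV i hi
      obtain ⟨a, ha⟩ := hvvsurj _ hδV
      have h0a : vv 0 ≤ δ i := ha ▸ hvvmono.monotone (Fin.zero_le a)
      have : e i ⊆ B (vv 0) := (hkey i hi _ (hVpos _ (hvvmem 0))).mpr h0a
      exact this (hei ▸ Finset.mem_singleton_self u)
    rw [hw]
    simp only [hBfull]
    have : φ.symm Finset.univ = yE := by rw [← hφtop, φ.symm_apply_apply]
    rw [this]
  -- the exponents
  set g : ℕ → ℕ := fun t => if t = 0 then 0 else vv ⟨min (t-1) c, by omega⟩ with hg
  have hgmono : Monotone g := by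
    intro s t hst
    rw [hg]
    by_cases hs : s = 0
    · simp [hs]
    · have ht : t ≠ 0 := by omega
      simp only [if_neg hs, if_neg ht]
      exact hvvmono.monotone (by simp [Fin.mk_le_mk]; omega)
  have hgsucc : ∀ a : Fin (c+1), g (a.val + 1) = vv a := by
    intro a
    rw [hg]
    simp only [Nat.add_sub_cancel, if_neg (Nat.succ_ne_zero _)]
    congr 1
    exact Fin.ext (by simp; omega)
  set p : Fin (c + 1) → ℕ := fun a => g (a.val + 1) - g a.val with hp
  have hppos : ∀ a, 0 < p a := by
    intro a
    rw [hp]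
    simp only
    rw [hgsucc]
    refine Nat.sub_pos_of_lt ?_
    rw [hg]
    by_cases ha : a.val = 0
    · simp only [if_pos ha]
      exact hVpos _ (hvvmem a)
    · simp only [if_neg ha]
      apply hvvmono
      simp only [Fin.lt_iff_val_lt_val, Fin.val_mk]
      omega
  refine ⟨c, w, p, hanti, hppos, hw0, ⟨c, w, p, hanti, hppos, hw0, rfl⟩, ?_⟩
  intro i
  by_cases hi : x i ≤ y
  · obtain ⟨b, hb⟩ := hvvsurj _ (hmemV i hi)
    have hcond : ∀ a, x i ≤ w a ↔ a.val ≤ b.val := by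
      intro a
      rw [hxw i hi a, ← hb]
      exact ⟨fun h => hvvmono.le_iff_le.mp h, fun h => hvvmono.monotone h⟩
    have hstep : ∀ a : Fin (c+1),
        (if x i ≤ w a then p a else 0) = (if a.val ≤ b.val then g (a.val+1) - g a.val else 0) := by
      intro a
      simp only [hcond a, hp]
    rw [Finset.sum_congr rfl (fun a _ => hstep a)]
    rw [Fin.sum_univ_eq_sum_range (fun t => if t ≤ b.val then g (t+1) - g t else 0) (c+1)]
    have hsub : Finset.range (b.val + 1) ⊆ Finset.range (c + 1) := by
      apply Finset.range_subset_range.mpr; omega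
    rw [← Finset.sum_subset hsub (fun t _ ht => by
      rw [Finset.mem_range] at ht; rw [if_neg (by omega)])]
    have hcg : ∀ t ∈ Finset.range (b.val + 1),
        (if t ≤ b.val then g (t+1) - g t else 0) = g (t+1) - g t := by
      intro t ht
      rw [Finset.mem_range] at ht
      exact if_pos (by omega)
    rw [Finset.sum_congr rfl hcg, Finset.sum_range_tsub hgmono]
    rw [hgsucc b, hb]
    simp [hg]
  · have hzero : δ i = 0 := by
      by_contra h
      exact hi ((hδ i).mp (Nat.pos_of_ne_zero h))
    rw [hzero]
    refine Finset.sum_eq_zero fun a _ => ?_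
    rw [if_neg (fun h => hi (le_trans h (hwley a)))]

end
end

section
/- Let P be a simplicial poset with vertex set V, let ℓ ≥ 1, and let α ∈ ℤⁿ with −ℓ ≤ αᵢ for all i and with αⱼ > 0 for at least one index j. Then Ext_A^i(A/m_ℓ, A_P)_α = 0 for all i. -/
open scoped Classical
open MvPolynomial
set_option synthInstance.maxHeartbeats 1000000
set_option maxHeartbeats 1000000
set_option linter.unusedSectionVars false
set_option linter.unusedVariables false

noncomputable section

variable (P : Type) [Fintype P] [PartialOrder P] [OrderBot P]
variable (k : Type) [Field k]

variable (n : ℕ) (x : Fin n → P)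

/-- The ℤⁿ-graded piece of the face ring of degree `α`, with respect to the atom
labelling `x : Fin n → P`: the span of (classes of) monomials of `k[P]` whose
ℤⁿ-degree (each face `y` contributing `e_i` for every atom `x i ≤ y`) is `α`. -/
def facePiece (α : Fin n → ℤ) : Submodule k (FaceRing P k) :=
  Submodule.span k
    {r | ∃ σ : P →₀ ℕ,
      (∀ j : Fin n, (∑ y ∈ σ.support, if x j ≤ y then (σ y : ℤ) else 0) = α j) ∧
      r = Ideal.Quotient.mk _ (monomial σ (1 : k))}

/-- Cochains of the complex `Hom_A(K_•^ℓ, A_P)`: a free basis of `K_t^ℓ` is indexed by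
`t`-subsets of `Fin n`, so `Hom_A(K_t^ℓ, A_P)` is identified with functions from
`t`-subsets to `A_P`; we take functions on all finite subsets at once. -/
abbrev KCochain := Finset (Fin n) → FaceRing P k

/-- The differential of `Hom_A(K_•^ℓ, A_P)`:
`(df)(G) = Σ_{j ∈ G} (-1)^{|{i ∈ G : i < j}|} x_j^ℓ · f(G \ {j})`. -/
def koszulD (ℓ : ℕ) : KCochain P k n →ₗ[k] KCochain P k n :=
  LinearMap.pi fun G =>
    ∑ j ∈ G, ((-1 : k) ^ ((G.filter fun i => i < j).card)) •
      ((LinearMap.mulLeft k ((fv P k (x j)) ^ ℓ)).comp (LinearMap.proj (G.erase j)))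

/-- The degree-`(t, α)` graded piece of the Koszul cochains: functions supported on
`t`-subsets `G`, with value at `G` in the graded piece of degree `α + ℓ·χ_G`. -/
def gradedKC (ℓ t : ℕ) (α : Fin n → ℤ) : Submodule k (KCochain P k n) :=
  Submodule.pi Set.univ fun G =>
    if G.card = t then facePiece P k n x (fun j => α j + if j ∈ G then (ℓ : ℤ) else 0)
    else ⊥

/-- Cocycles of degree `(t, α)`. -/
def ZK (ℓ t : ℕ) (α : Fin n → ℤ) : Submodule k (KCochain P k n) :=
  LinearMap.ker (koszulD P k n x ℓ) ⊓ gradedKC P k n x ℓ t α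

/-- Coboundaries of degree `(t, α)`. -/
def BK (ℓ t : ℕ) (α : Fin n → ℤ) : Submodule k (KCochain P k n) :=
  Submodule.map (koszulD P k n x ℓ) (gradedKC P k n x ℓ (t - 1) α)

/-- The graded piece `Ext_A^t(A/m_ℓ, A_P)_α`, computed as degree-`(t,α)` cohomology
of the complex `Hom_A(K_•^ℓ, A_P)`. -/
abbrev ExtPiece (ℓ t : ℕ) (α : Fin n → ℤ) :=
  ↥(ZK P k n x ℓ t α) ⧸
    Submodule.comap (ZK P k n x ℓ t α).subtype (BK P k n x ℓ t α)

namespace SPaux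

variable {P : Type} [Fintype P] [PartialOrder P] [OrderBot P]
variable {n : ℕ}

/-- vertex (atom) set of a face, as a subset of the atom labels -/
def VS (x : Fin n → P) (w : P) : Finset (Fin n) := Finset.univ.filter (fun i => x i ≤ w)

variable {x : Fin n → P}

lemma mem_VS {w : P} {i : Fin n} : i ∈ VS x w ↔ x i ≤ w := by simp [VS]

lemma VS_mono {v w : P} (h : v ≤ w) : VS x v ⊆ VS x w := by
  intro i hi; rw [mem_VS] at *; exact hi.trans h

set_option linter.unusedSectionVars false

lemma VS_bot (hatom : ∀ i, IsAtom (x i)) : VS x (⊥ : P) = ∅ := by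
  ext i
  simp only [mem_VS, Finset.notMem_empty, iff_false, le_bot_iff]
  exact (hatom i).1

section Struct

variable (hP : IsSimplicialPoset P) (hinj : Function.Injective x)
  (hatom : ∀ i, IsAtom (x i)) (hsurj : ∀ a : P, IsAtom a → ∃ i, x i = a)

lemma mem_ub {v w z : P} : z ∈ upperBounds {v, w} ↔ v ≤ z ∧ w ≤ z := by
  simp [upperBounds]

include hP hinj hatom hsurj

lemma VS_atom (i : Fin n) :
    VS x (x i) = {i} := by
  ext l
  simp only [mem_VS, Finset.mem_singleton]
  constructor
  · intro h
    rcases ((hatom i).le_iff).1 h with h0 | h0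
    · exact absurd h0 (hatom l).1
    · exact hinj h0
  · rintro rfl; exact le_rfl

/-- key order-reflection: within a common upper bound, vertex sets detect order -/
lemma le_of_VS_subset {u v w : P} (hv : v ≤ u) (hw : w ≤ u) (h : VS x v ⊆ VS x w) : v ≤ w := by
  obtain ⟨m, ⟨e⟩⟩ := hP u
  have hvI : v ∈ Set.Icc (⊥ : P) u := ⟨bot_le, hv⟩
  have hwI : w ∈ Set.Icc (⊥ : P) u := ⟨bot_le, hw⟩
  -- e maps the bottom to ∅
  have hbot : e ⟨⊥, ⟨le_rfl, bot_le⟩⟩ = ∅ := by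
    have h1 : e ⟨⊥, ⟨le_rfl, bot_le⟩⟩ ≤ e (e.symm ∅) := by
      apply e.le_iff_le.2
      exact (e.symm ∅).2.1
    simpa using h1
  -- singletons come from atoms
  have hsing : ∀ r : Fin m, IsAtom ((e.symm {r} : Set.Icc (⊥:P) u) : P) := by
    intro r
    constructor
    · intro hc
      have : e.symm {r} = ⟨⊥, ⟨le_rfl, bot_le⟩⟩ := by
        apply Subtype.ext; exact hc
      have h2 : ({r} : Finset (Fin m)) = ∅ := by
        rw [← hbot, ← this]; simp
      simp at h2
    · intro b hb
      have hbI : b ∈ Set.Icc (⊥ : P) u := ⟨bot_le, le_trans hb.le ((e.symm {r}).2.2)⟩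
      have hlt : (⟨b, hbI⟩ : Set.Icc (⊥:P) u) < e.symm {r} := Subtype.coe_lt_coe.1 hb
      have h3 : e ⟨b, hbI⟩ < ({r} : Finset (Fin m)) := by
        have := e.lt_iff_lt.2 hlt
        simpa using this
      have h4 : e ⟨b, hbI⟩ = ∅ := by
        rcases Finset.lt_iff_ssubset.1 h3 with hss
        have := Finset.ssubset_singleton_iff.1 hss
        exact this
      have : (⟨b, hbI⟩ : Set.Icc (⊥:P) u) = ⟨⊥, ⟨le_rfl, bot_le⟩⟩ := by
        apply e.injective; rw [h4, hbot]
      simpa using congrArg Subtype.val this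
  have key : e ⟨v, hvI⟩ ⊆ e ⟨w, hwI⟩ := by
    intro r hr
    have h5 : e.symm {r} ≤ ⟨v, hvI⟩ := by
      rw [← e.le_iff_le]; simpa using hr
    obtain ⟨i, hi⟩ := hsurj _ (hsing r)
    have hxiv : x i ≤ v := by rw [hi]; exact h5
    have hxiw : x i ≤ w := mem_VS.1 (h (mem_VS.2 hxiv))
    have h6 : e.symm {r} ≤ ⟨w, hwI⟩ := by
      show ((e.symm {r} : Set.Icc (⊥:P) u) : P) ≤ w
      rw [← hi]; exact hxiw
    have := e.le_iff_le.2 h6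
    simpa using this
  exact e.le_iff_le.1 key

/-- existence of subfaces with prescribed vertex set -/
lemma exists_face {u : P} {S : Finset (Fin n)} (hS : S ⊆ VS x u) : ∃ z, z ≤ u ∧ VS x z = S := by
  obtain ⟨m, ⟨e⟩⟩ := hP u
  have hbot : e ⟨⊥, ⟨le_rfl, bot_le⟩⟩ = ∅ := by
    have h1 : e ⟨⊥, ⟨le_rfl, bot_le⟩⟩ ≤ e (e.symm ∅) := by
      apply e.le_iff_le.2
      exact (e.symm ∅).2.1
    simpa using h1
  have hsing : ∀ r : Fin m, IsAtom ((e.symm {r} : Set.Icc (⊥:P) u) : P) := by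
    intro r
    constructor
    · intro hc
      have : e.symm {r} = ⟨⊥, ⟨le_rfl, bot_le⟩⟩ := Subtype.ext hc
      have h2 : ({r} : Finset (Fin m)) = ∅ := by
        rw [← hbot, ← this]; simp
      simp at h2
    · intro b hb
      have hbI : b ∈ Set.Icc (⊥ : P) u := ⟨bot_le, le_trans hb.le ((e.symm {r}).2.2)⟩
      have hlt : (⟨b, hbI⟩ : Set.Icc (⊥:P) u) < e.symm {r} := Subtype.coe_lt_coe.1 hb
      have h3 : e ⟨b, hbI⟩ < ({r} : Finset (Fin m)) := by
        have := e.lt_iff_lt.2 hlt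
        simpa using this
      have h4 : e ⟨b, hbI⟩ = ∅ :=
        Finset.ssubset_singleton_iff.1 (Finset.lt_iff_ssubset.1 h3)
      have : (⟨b, hbI⟩ : Set.Icc (⊥:P) u) = ⟨⊥, ⟨le_rfl, bot_le⟩⟩ := by
        apply e.injective; rw [h4, hbot]
      simpa using congrArg Subtype.val this
  have hsym : ∀ (r : Fin m) {a : P} (ha : IsAtom a) (hau : a ≤ u),
      r ∈ e ⟨a, ⟨bot_le, hau⟩⟩ → (e.symm {r} : Set.Icc (⊥:P) u) = ⟨a, ⟨bot_le, hau⟩⟩ := by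
    intro r a ha hau hr
    have h5 : e.symm {r} ≤ ⟨a, ⟨bot_le, hau⟩⟩ := by
      rw [← e.le_iff_le]; simpa using hr
    have h6 : ((e.symm {r} : Set.Icc (⊥:P) u) : P) ≤ a := h5
    rcases ha.le_iff.1 h6 with h7 | h7
    · exact absurd h7 (hsing r).1
    · exact Subtype.ext h7
  have hne : ∀ {a : P} (ha : IsAtom a) (hau : a ≤ u),
      (e ⟨a, ⟨bot_le, hau⟩⟩).Nonempty := by
    intro a ha hau
    rw [Finset.nonempty_iff_ne_empty]
    intro hc
    have : (⟨a, ⟨bot_le, hau⟩⟩ : Set.Icc (⊥:P) u) = ⟨⊥, ⟨le_rfl, bot_le⟩⟩ := by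
      apply e.injective; rw [hc, hbot]
    exact ha.1 (by simpa using congrArg Subtype.val this)
  set F : Fin n → Finset (Fin m) :=
    fun i => if h : x i ≤ u then e ⟨x i, ⟨bot_le, h⟩⟩ else ∅ with hF
  set Z := e.symm (S.biUnion F) with hZ
  refine ⟨(Z : P), Z.2.2, ?_⟩
  ext i
  rw [mem_VS]
  constructor
  · intro hiz
    have hiu : x i ≤ u := hiz.trans Z.2.2
    have h8 : e ⟨x i, ⟨bot_le, hiu⟩⟩ ⊆ S.biUnion F := by
      have h9 : (⟨x i, ⟨bot_le, hiu⟩⟩ : Set.Icc (⊥:P) u) ≤ Z := hiz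
      have := e.le_iff_le.2 h9
      simpa [hZ] using this
    obtain ⟨r, hr⟩ := hne (hatom i) hiu
    have := h8 hr
    rw [Finset.mem_biUnion] at this
    obtain ⟨i', hi'S, hri'⟩ := this
    have hi'u : x i' ≤ u := mem_VS.1 (hS hi'S)
    rw [hF] at hri'
    simp only [dif_pos hi'u] at hri'
    have e1 := hsym r (hatom i) hiu hr
    have e2 := hsym r (hatom i') hi'u hri'
    have : x i = x i' := by
      have := e1.symm.trans e2
      simpa using congrArg Subtype.val this
    rwa [hinj this]
  · intro hiS
    have hiu : x i ≤ u := mem_VS.1 (hS hiS)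
    have h10 : e ⟨x i, ⟨bot_le, hiu⟩⟩ ⊆ S.biUnion F := by
      intro r hr
      rw [Finset.mem_biUnion]
      exact ⟨i, hiS, by rw [hF]; simpa [dif_pos hiu] using hr⟩
    have : (⟨x i, ⟨bot_le, hiu⟩⟩ : Set.Icc (⊥:P) u) ≤ Z := by
      rw [← e.le_iff_le]
      simpa [hZ] using h10
    exact this

lemma VS_inj_le {u v w : P} (hv : v ≤ u) (hw : w ≤ u) (h : VS x v = VS x w) : v = w :=
  le_antisymm (le_of_VS_subset hP hinj hatom hsurj hv hw h.le) (le_of_VS_subset hP hinj hatom hsurj hw hv h.ge)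

lemma exists_isGLB {u v w : P} (hv : v ≤ u) (hw : w ≤ u) :
    ∃ z, IsGLB {v, w} z ∧ VS x z = VS x v ∩ VS x w ∧ z ≤ u := by
  obtain ⟨z, hzu, hzV⟩ := exists_face hP hinj hatom hsurj
    (show VS x v ∩ VS x w ⊆ VS x u from (Finset.inter_subset_left).trans (VS_mono hv))
  have hzv : z ≤ v := le_of_VS_subset hP hinj hatom hsurj hzu hv (by rw [hzV]; exact Finset.inter_subset_left)
  have hzw : z ≤ w := le_of_VS_subset hP hinj hatom hsurj hzu hw (by rw [hzV]; exact Finset.inter_subset_right)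
  refine ⟨z, ⟨?_, ?_⟩, hzV, hzu⟩
  · intro a ha
    simp only [Set.mem_insert_iff, Set.mem_singleton_iff] at ha
    rcases ha with rfl | rfl
    · exact hzv
    · exact hzw
  · intro l hl
    have hlv : l ≤ v := hl (by simp)
    have hlw : l ≤ w := hl (by simp)
    exact le_of_VS_subset hP hinj hatom hsurj (hlv.trans hv) hzu
      (by rw [hzV]; exact Finset.subset_inter (VS_mono hlv) (VS_mono hlw))

lemma exists_mub {u v w : P} (hv : v ≤ u) (hw : w ≤ u) :
    ∃ z, z ∈ MUB v w ∧ z ≤ u ∧ VS x z = VS x v ∪ VS x w := by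
  obtain ⟨z, hzu, hzV⟩ := exists_face hP hinj hatom hsurj
    (show VS x v ∪ VS x w ⊆ VS x u from Finset.union_subset (VS_mono hv) (VS_mono hw))
  have hub : z ∈ upperBounds {v, w} := by
    rw [mem_ub]
    constructor
    · exact le_of_VS_subset hP hinj hatom hsurj hv hzu (by rw [hzV]; exact Finset.subset_union_left)
    · exact le_of_VS_subset hP hinj hatom hsurj hw hzu (by rw [hzV]; exact Finset.subset_union_right)
  refine ⟨z, ⟨hub, ?_⟩, hzu, hzV⟩
  intro z' hz' hz'z
  rw [mem_ub] at hz'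
  apply VS_inj_le hP hinj hatom hsurj (hz'z.trans hzu) hzu
  apply Finset.Subset.antisymm (VS_mono hz'z)
  rw [hzV]
  exact Finset.union_subset (VS_mono hz'.1) (VS_mono hz'.2)

lemma VS_mub {v w z : P} (hz : z ∈ MUB v w) : VS x z = VS x v ∪ VS x w := by
  rcases hz with ⟨hub, hmin⟩
  rw [mem_ub] at hub
  obtain ⟨z0, hz0, hz0z, hz0V⟩ := exists_mub hP hinj hatom hsurj hub.1 hub.2
  rw [← hmin z0 hz0.1 hz0z]
  exact hz0V

lemma mub_eq_of_le {u v w z1 z2 : P} (h1 : z1 ∈ MUB v w) (h2 : z2 ∈ MUB v w)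
    (hu1 : z1 ≤ u) (hu2 : z2 ≤ u) : z1 = z2 :=
  VS_inj_le hP hinj hatom hsurj hu1 hu2
    ((VS_mub hP hinj hatom hsurj h1).trans (VS_mub hP hinj hatom hsurj h2).symm)

lemma ub_empty_of_mub_ne {v w z1 z2 : P} (h1 : z1 ∈ MUB v w) (h2 : z2 ∈ MUB v w)
    (hne : z1 ≠ z2) : upperBounds {z1, z2} = ∅ := by
  rw [Set.eq_empty_iff_forall_notMem]
  intro u hu
  rw [mem_ub] at hu
  exact hne (mub_eq_of_le hP hinj hatom hsurj h1 h2 hu.1 hu.2)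

lemma exists_atom_le {w : P} (hw : w ≠ ⊥) : ∃ i, x i ≤ w := by
  obtain ⟨m, ⟨e⟩⟩ := hP w
  have hbot : e ⟨⊥, ⟨le_rfl, bot_le⟩⟩ = ∅ := by
    have h1 : e ⟨⊥, ⟨le_rfl, bot_le⟩⟩ ≤ e (e.symm ∅) := by
      apply e.le_iff_le.2
      exact (e.symm ∅).2.1
    simpa using h1
  have hwne : e ⟨w, ⟨bot_le, le_rfl⟩⟩ ≠ ∅ := by
    intro hc
    apply hw
    have : (⟨w, ⟨bot_le, le_rfl⟩⟩ : Set.Icc (⊥:P) w) = ⟨⊥, ⟨le_rfl, bot_le⟩⟩ := by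
      apply e.injective; rw [hc, hbot]
    simpa using congrArg Subtype.val this
  obtain ⟨r, hr⟩ := Finset.nonempty_iff_ne_empty.2 hwne
  have hsing : IsAtom ((e.symm {r} : Set.Icc (⊥:P) w) : P) := by
    constructor
    · intro hc
      have : e.symm {r} = ⟨⊥, ⟨le_rfl, bot_le⟩⟩ := Subtype.ext hc
      have h2 : ({r} : Finset (Fin m)) = ∅ := by
        rw [← hbot, ← this]; simp
      simp at h2
    · intro b hb
      have hbI : b ∈ Set.Icc (⊥ : P) w := ⟨bot_le, le_trans hb.le ((e.symm {r}).2.2)⟩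
      have hlt : (⟨b, hbI⟩ : Set.Icc (⊥:P) w) < e.symm {r} := Subtype.coe_lt_coe.1 hb
      have h3 : e ⟨b, hbI⟩ < ({r} : Finset (Fin m)) := by
        have := e.lt_iff_lt.2 hlt
        simpa using this
      have h4 : e ⟨b, hbI⟩ = ∅ :=
        Finset.ssubset_singleton_iff.1 (Finset.lt_iff_ssubset.1 h3)
      have : (⟨b, hbI⟩ : Set.Icc (⊥:P) w) = ⟨⊥, ⟨le_rfl, bot_le⟩⟩ := by
        apply e.injective; rw [h4, hbot]
      simpa using congrArg Subtype.val this
  obtain ⟨i, hi⟩ := hsurj _ hsing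
  exact ⟨i, by rw [hi]; exact (e.symm {r}).2.2⟩

lemma VS_ne_empty {w : P} (hw : w ≠ ⊥) : (VS x w).Nonempty := by
  obtain ⟨i, hi⟩ := exists_atom_le hP hinj hatom hsurj hw
  exact ⟨i, mem_VS.2 hi⟩

end Struct

section Ring

variable {k : Type} [Field k] {x : Fin n → P}

/-- the ℤⁿ-degree of a monomial exponent -/
def degm (x : Fin n → P) (σ : P →₀ ℕ) : Fin n → ℤ :=
  fun j => ∑ y ∈ σ.support, if x j ≤ y then (σ y : ℤ) else 0

lemma degm_eq_sum (σ : P →₀ ℕ) (j : Fin n) :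
    degm x σ j = σ.sum fun y p => if x j ≤ y then (p : ℤ) else 0 := by
  rw [Finsupp.sum]
  apply Finset.sum_congr rfl
  intro y _; rfl

lemma degm_add (σ τ : P →₀ ℕ) : degm x (σ + τ) = degm x σ + degm x τ := by
  funext j
  simp only [degm_eq_sum, Pi.add_apply]
  rw [Finsupp.sum_add_index']
  · intro y; simp
  · intro y p q; split <;> push_cast <;> simp

lemma degm_single (y : P) (p : ℕ) :
    degm x (Finsupp.single y p) = fun j => if x j ≤ y then (p : ℤ) else 0 := by
  funext j
  rw [degm_eq_sum, Finsupp.sum_single_index]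
  simp

lemma degm_single_atom (hinj : Function.Injective x) (hatom : ∀ i, IsAtom (x i))
    (i : Fin n) (p : ℕ) :
    degm x (Finsupp.single (x i) p) = fun j => if j = i then (p : ℤ) else 0 := by
  rw [degm_single]
  funext j
  congr 1
  rw [eq_iff_iff]
  constructor
  · intro h
    rcases ((hatom i).le_iff).1 h with h0 | h0
    · exact absurd h0 (hatom j).1
    · exact hinj h0
  · rintro rfl; exact le_rfl

/-- the quotient map as a `k`-linear map -/
def mkL : MvPolynomial P k →ₗ[k] FaceRing P k :=
  (Ideal.Quotient.mkₐ k (faceIdeal P k)).toLinearMap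

lemma mkL_apply (p : MvPolynomial P k) :
    (mkL : MvPolynomial P k →ₗ[k] FaceRing P k) p = Ideal.Quotient.mk (faceIdeal P k) p := rfl

/-- polynomial-level graded piece -/
def Rpiece (k : Type) [Field k] (x : Fin n → P) (β : Fin n → ℤ) :
    Submodule k (MvPolynomial P k) :=
  Submodule.span k {p | ∃ σ, degm x σ = β ∧ p = monomial σ 1}

lemma facePiece_eq (β : Fin n → ℤ) :
    facePiece P k n x β = Submodule.map (mkL) (Rpiece k x β) := by
  rw [Rpiece, Submodule.map_span, facePiece]
  congr 1
  ext r
  constructor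
  · rintro ⟨σ, hσ, rfl⟩
    exact ⟨monomial σ 1, ⟨σ, funext hσ, rfl⟩, rfl⟩
  · rintro ⟨p, ⟨σ, hσ, rfl⟩, rfl⟩
    exact ⟨σ, fun j => congrFun hσ j, rfl⟩

lemma mem_span_monomials (Q : (P →₀ ℕ) → Prop) (p : MvPolynomial P k) :
    p ∈ Submodule.span k {r : MvPolynomial P k | ∃ σ, Q σ ∧ r = monomial σ 1} ↔
      ∀ σ ∈ p.support, Q σ := by
  constructor
  · intro hp
    induction hp using Submodule.span_induction with
    | mem r hr =>
      obtain ⟨σ, hQ, rfl⟩ := hr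
      intro τ hτ
      rw [MvPolynomial.support_monomial] at hτ
      split at hτ
      · simp at hτ
      · rw [Finset.mem_singleton] at hτ; subst hτ; exact hQ
    | zero => intro τ hτ; simp at hτ
    | add a b _ _ ha hb =>
      intro τ hτ
      rcases Finset.mem_union.1 (MvPolynomial.support_add hτ) with h | h
      · exact ha τ h
      · exact hb τ h
    | smul c a _ ha =>
      intro τ hτ
      exact ha τ (MvPolynomial.support_smul hτ)
  · intro hp
    rw [MvPolynomial.as_sum p]
    apply Submodule.sum_mem
    intro σ hσ
    have : monomial σ (coeff σ p) = (coeff σ p) • monomial σ (1:k) := by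
      rw [smul_monomial, smul_eq_mul, mul_one]
    rw [this]
    exact Submodule.smul_mem _ _ (Submodule.subset_span ⟨σ, hp σ hσ, rfl⟩)

lemma mem_Rpiece_iff (β : Fin n → ℤ) (p : MvPolynomial P k) :
    p ∈ Rpiece k x β ↔ ∀ σ ∈ p.support, degm x σ = β :=
  mem_span_monomials _ p

lemma mem_facePiece_of (β : Fin n → ℤ) (σ : P →₀ ℕ) (h : degm x σ = β) :
    Ideal.Quotient.mk (faceIdeal P k) (monomial σ 1) ∈ facePiece P k n x β :=
  Submodule.subset_span ⟨σ, fun j => congrFun h j, rfl⟩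

-- relations in the quotient
lemma mk_X_bot : Ideal.Quotient.mk (faceIdeal P k) (X (⊥:P)) = 1 := by
  rw [← sub_eq_zero, ← map_one (Ideal.Quotient.mk (faceIdeal P k)), ← map_sub,
    Ideal.Quotient.eq_zero_iff_mem]
  apply Ideal.subset_span
  right; rfl

lemma mk_mul_eq_zero {w y : P} (h : upperBounds {w, y} = ∅) :
    Ideal.Quotient.mk (faceIdeal P k) (X w * X y) = 0 := by
  rw [Ideal.Quotient.eq_zero_iff_mem]
  apply Ideal.subset_span
  left; left; exact ⟨w, y, h, rfl⟩

lemma mk_rel {w y m : P} (hub : (upperBounds {w, y}).Nonempty) (hglb : IsGLB {w, y} m) :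
    Ideal.Quotient.mk (faceIdeal P k) (X w * X y) =
      Ideal.Quotient.mk (faceIdeal P k) (X m) *
        ∑ z ∈ (Set.toFinite (MUB w y)).toFinset,
          Ideal.Quotient.mk (faceIdeal P k) (X z) := by
  have hI : X w * X y - X m * ∑ z ∈ (Set.toFinite (MUB w y)).toFinset, X z ∈
      faceIdeal P k := by
    apply Ideal.subset_span
    left; right; exact ⟨w, y, m, hub, hglb, rfl⟩
  have := (Ideal.Quotient.eq (I := faceIdeal P k)).2 hI
  rw [this, map_mul, map_sum]

lemma monomial_split {σ : P →₀ ℕ} {y : P} (h : 1 ≤ σ y) :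
    monomial σ (1:k) = X y * monomial (σ - Finsupp.single y 1) 1 := by
  rw [MvPolynomial.X, MvPolynomial.monomial_mul, one_mul]
  have h2 : (Finsupp.single y 1) ≤ σ := Finsupp.single_le_iff.2 h
  have h3 : Finsupp.single y 1 + (σ - Finsupp.single y 1) = σ := by
    rw [add_comm]; exact tsub_add_cancel_of_le h2
  rw [h3]

end Ring

section Phi

variable {k : Type} [Field k] {x : Fin n → P}

def gsum (s : Finset (Fin n)) : Fin n →₀ ℕ := ∑ i ∈ s, Finsupp.single i 1

lemma gsum_apply (s : Finset (Fin n)) (j : Fin n) :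
    gsum s j = if j ∈ s then 1 else 0 := by
  rw [gsum, Finset.sum_apply']
  rw [Finset.sum_congr rfl (fun i _ => Finsupp.single_apply)]
  simp

def gam (x : Fin n → P) (σ : P →₀ ℕ) : Fin n →₀ ℕ :=
  σ.sum fun w p => p • gsum (VS x w)

lemma gam_apply (σ : P →₀ ℕ) (j : Fin n) :
    gam x σ j = σ.sum fun w p => p * (if x j ≤ w then 1 else 0) := by
  rw [gam, Finsupp.sum_apply, Finsupp.sum, Finsupp.sum]
  apply Finset.sum_congr rfl
  intro w _
  rw [Finsupp.smul_apply, gsum_apply]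
  simp only [mem_VS, smul_eq_mul]

lemma degm_eq_gam (σ : P →₀ ℕ) : degm x σ = fun j => ((gam x σ j : ℕ) : ℤ) := by
  funext j
  rw [gam_apply, degm_eq_sum, Finsupp.sum]
  push_cast
  apply Finset.sum_congr rfl
  intro w _
  split <;> simp_all

lemma gam_add (σ τ : P →₀ ℕ) : gam x (σ + τ) = gam x σ + gam x τ := by
  rw [gam, gam, gam]
  apply Finsupp.sum_add_index'
  · intro w; simp
  · intro w p q; rw [add_smul]

lemma gam_single (w : P) (p : ℕ) : gam x (Finsupp.single w p) = p • gsum (VS x w) := by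
  rw [gam, Finsupp.sum_single_index]
  simp

def phi (k : Type) [Field k] (x : Fin n → P) (y : P) :
    MvPolynomial P k →ₐ[k] MvPolynomial (Fin n) k :=
  aeval fun w => if w ≤ y then ∏ i ∈ VS x w, X i else 0

lemma prod_X_monomial (s : Finset (Fin n)) :
    ∏ i ∈ s, (X i : MvPolynomial (Fin n) k) = monomial (gsum s) 1 := by
  induction s using Finset.cons_induction with
  | empty => simp [gsum]
  | cons a s ha ih =>
    rw [Finset.prod_cons, ih, MvPolynomial.X, MvPolynomial.monomial_mul, one_mul]
    congr 1
    conv_rhs => rw [gsum, Finset.sum_cons]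
    rw [gsum]

lemma prod_monomial_one (F : Finset P) (h : P → (Fin n →₀ ℕ)) :
    ∏ w ∈ F, monomial (h w) (1:k) = monomial (∑ w ∈ F, h w) 1 := by
  induction F using Finset.cons_induction with
  | empty => simp
  | cons a s ha ih =>
    rw [Finset.prod_cons, ih, MvPolynomial.monomial_mul, one_mul, Finset.sum_cons]

lemma phi_monomial (y : P) (σ : P →₀ ℕ) (c : k) :
    phi k x y (monomial σ c) =
      if ∀ w ∈ σ.support, w ≤ y then monomial (gam x σ) c else 0 := by
  rw [phi, MvPolynomial.aeval_monomial]
  split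
  · rename_i hall
    have : (σ.prod fun w p => (if w ≤ y then ∏ i ∈ VS x w, (X i : MvPolynomial (Fin n) k) else 0) ^ p)
        = monomial (gam x σ) 1 := by
      rw [Finsupp.prod, gam, Finsupp.sum, ← prod_monomial_one]
      apply Finset.prod_congr rfl
      intro w hw
      rw [if_pos (hall w hw), prod_X_monomial, MvPolynomial.monomial_pow, one_pow]
    rw [this, MvPolynomial.algebraMap_eq, MvPolynomial.C_mul_monomial, mul_one]
  · rename_i hnot
    push_neg at hnot
    obtain ⟨w0, hw0, hw0y⟩ := hnot
    have : (σ.prod fun w p => (if w ≤ y then ∏ i ∈ VS x w, (X i : MvPolynomial (Fin n) k) else 0) ^ p) = 0 := by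
      rw [Finsupp.prod]
      apply Finset.prod_eq_zero hw0
      rw [if_neg hw0y]
      exact zero_pow (Finsupp.mem_support_iff.1 hw0)
    rw [this, mul_zero]

section PhiKer

variable (hP : IsSimplicialPoset P) (hinj : Function.Injective x)
  (hatom : ∀ i, IsAtom (x i)) (hsurj : ∀ a : P, IsAtom a → ∃ i, x i = a)

include hP hinj hatom hsurj

lemma phi_ker {p : MvPolynomial P k} (hp : p ∈ faceIdeal P k) (y : P) :
    phi k x y p = 0 := by
  have hle : faceIdeal P k ≤ RingHom.ker (phi k x y).toRingHom := by
    rw [faceIdeal, Ideal.span_le]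
    rintro f hf
    rw [SetLike.mem_coe, RingHom.mem_ker]
    rcases hf with (hf | hf) | hf
    · obtain ⟨w, w', hub, rfl⟩ := hf
      have : ¬ (w ≤ y ∧ w' ≤ y) := by
        rintro ⟨h1, h2⟩
        rw [Set.eq_empty_iff_forall_notMem] at hub
        exact hub y (mem_ub.2 ⟨h1, h2⟩)
      show phi k x y (X w * X w') = 0
      rw [map_mul, phi, MvPolynomial.aeval_X, MvPolynomial.aeval_X]
      rcases not_and_or.1 this with h | h
      · rw [if_neg h, zero_mul]
      · rw [if_neg h, mul_zero]
    · obtain ⟨w, w', m, hub, hglb, rfl⟩ := hf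
      show phi k x y (X w * X w' - X m * ∑ z ∈ (Set.toFinite (MUB w w')).toFinset, X z) = 0
      rw [map_sub, map_mul, map_mul, map_sum, sub_eq_zero]
      by_cases hwy : w ≤ y ∧ w' ≤ y
      · obtain ⟨z0, hz0, hz0y, hz0V⟩ := exists_mub hP hinj hatom hsurj hwy.1 hwy.2
        have hsum : ∑ z ∈ (Set.toFinite (MUB w w')).toFinset, phi k x y (X z)
            = monomial (gsum (VS x z0)) 1 := by
          rw [Finset.sum_eq_single_of_mem z0 ((Set.Finite.mem_toFinset _).2 hz0)]
          · rw [phi, MvPolynomial.aeval_X, if_pos hz0y, prod_X_monomial]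
          · intro z hz hzne
            rw [Set.Finite.mem_toFinset] at hz
            rw [phi, MvPolynomial.aeval_X, if_neg]
            intro hzy
            exact hzne (mub_eq_of_le hP hinj hatom hsurj hz hz0 hzy hz0y)
        rw [hsum]
        obtain ⟨u, hu⟩ := hub
        rw [mem_ub] at hu
        obtain ⟨m', hm', hm'V, _⟩ := exists_isGLB hP hinj hatom hsurj hu.1 hu.2
        have hmm : m = m' := hglb.unique hm'
        have hmy : m ≤ y := le_trans (hglb.1 (by simp)) hwy.1
        rw [phi, MvPolynomial.aeval_X, MvPolynomial.aeval_X, MvPolynomial.aeval_X,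
          if_pos hwy.1, if_pos hwy.2, if_pos hmy]
        rw [prod_X_monomial, prod_X_monomial, prod_X_monomial,
          MvPolynomial.monomial_mul, MvPolynomial.monomial_mul, one_mul]
        have hexp : gsum (VS x w) + gsum (VS x w') = gsum (VS x m) + gsum (VS x z0) := by
          ext j
          simp only [Finsupp.add_apply, gsum_apply, hmm, hm'V, hz0V]
          by_cases h1 : j ∈ VS x w <;> by_cases h2 : j ∈ VS x w' <;>
            simp [Finset.mem_inter, Finset.mem_union, h1, h2]
        rw [hexp]
      · have hL : phi k x y (X w) * phi k x y (X w') = 0 := by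
          rw [phi, MvPolynomial.aeval_X, MvPolynomial.aeval_X]
          rcases not_and_or.1 hwy with h | h
          · rw [if_neg h, zero_mul]
          · rw [if_neg h, mul_zero]
        have hR : ∑ z ∈ (Set.toFinite (MUB w w')).toFinset, phi k x y (X z) = 0 := by
          apply Finset.sum_eq_zero
          intro z hz
          rw [Set.Finite.mem_toFinset] at hz
          have hzub := hz.1
          rw [mem_ub] at hzub
          rw [phi, MvPolynomial.aeval_X, if_neg]
          intro hzy
          exact (not_and_or.1 hwy).elim (fun h => h (hzub.1.trans hzy)) (fun h => h (hzub.2.trans hzy))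
        rw [hL, hR, mul_zero]
    · rcases hf with rfl
      show phi k x y (X (⊥:P) - 1) = 0
      rw [map_sub, map_one, phi, MvPolynomial.aeval_X, if_pos bot_le,
        VS_bot hatom]
      simp
  exact hle hp

end PhiKer

end Phi

section Straighten

variable {k : Type} [Field k] {x : Fin n → P}

/-- degree weight -/
def Dm (x : Fin n → P) (σ : P →₀ ℕ) : ℕ := σ.sum fun w p => p * (VS x w).card

/-- squared weight -/
def Mu (x : Fin n → P) (σ : P →₀ ℕ) : ℕ := σ.sum fun w p => p * (VS x w).card ^ 2

lemma Dm_add (σ τ : P →₀ ℕ) : Dm x (σ + τ) = Dm x σ + Dm x τ :=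
  Finsupp.sum_add_index' (fun w => by simp) (fun w p q => by rw [add_mul])

lemma Mu_add (σ τ : P →₀ ℕ) : Mu x (σ + τ) = Mu x σ + Mu x τ :=
  Finsupp.sum_add_index' (fun w => by simp) (fun w p q => by rw [add_mul])

lemma Dm_single (w : P) (p : ℕ) : Dm x (Finsupp.single w p) = p * (VS x w).card :=
  Finsupp.sum_single_index (by simp)

lemma Mu_single (w : P) (p : ℕ) : Mu x (Finsupp.single w p) = p * (VS x w).card ^ 2 :=
  Finsupp.sum_single_index (by simp)

lemma VS_card_le (w : P) : (VS x w).card ≤ n := by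
  have := Finset.card_le_univ (VS x w)
  simpa using this

lemma sq_ineq {a b c d : ℕ} (h : a + b = c + d) (h1 : a < c) (h2 : a < d) :
    c ^ 2 + d ^ 2 < a ^ 2 + b ^ 2 := by
  zify at *
  nlinarith [mul_pos (sub_pos.2 h1) (sub_pos.2 h2)]

lemma Mu_le_nDm (σ : P →₀ ℕ) : Mu x σ ≤ n * Dm x σ := by
  rw [Mu, Dm, Finsupp.sum, Finsupp.sum, Finset.mul_sum]
  apply Finset.sum_le_sum
  intro w _
  have h1 := VS_card_le (x := x) w
  have h2 : (VS x w).card ^ 2 ≤ n * (VS x w).card := by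
    rw [pow_two]; exact Nat.mul_le_mul_right _ h1
  calc σ w * (VS x w).card ^ 2 ≤ σ w * (n * (VS x w).card) := Nat.mul_le_mul_left _ h2
    _ = n * (σ w * (VS x w).card) := by ring

/-- standard monomial exponents -/
def Std (σ : P →₀ ℕ) : Prop :=
  (⊥ : P) ∉ σ.support ∧ ∀ v ∈ σ.support, ∀ w ∈ σ.support, v ≤ w ∨ w ≤ v

/-- span of standard monomials in the face ring -/
def SStd (k : Type) [Field k] : Submodule k (FaceRing P k) :=
  Submodule.span k {r | ∃ σ : P →₀ ℕ, Std σ ∧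
    r = Ideal.Quotient.mk (faceIdeal P k) (monomial σ 1)}

lemma mk_erase_bot (σ : P →₀ ℕ) :
    Ideal.Quotient.mk (faceIdeal P k) (monomial σ 1) =
    Ideal.Quotient.mk (faceIdeal P k) (monomial (σ.erase ⊥) 1) := by
  conv_lhs => rw [← Finsupp.erase_add_single (⊥:P) σ]
  rw [← one_mul (1:k), ← MvPolynomial.monomial_mul, map_mul,
    ← MvPolynomial.X_pow_eq_monomial, map_pow, mk_X_bot, one_pow, mul_one, one_mul]

section StraightenMain

variable (hP : IsSimplicialPoset P) (hinj : Function.Injective x)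
  (hatom : ∀ i, IsAtom (x i)) (hsurj : ∀ a : P, IsAtom a → ∃ i, x i = a)

include hP hinj hatom hsurj

lemma straighten_aux (K : ℕ) :
    ∀ σ : P →₀ ℕ, 3 * (n * Dm x σ - Mu x σ) + σ ⊥ ≤ K →
      Ideal.Quotient.mk (faceIdeal P k) (monomial σ 1) ∈ SStd (P := P) k := by
  induction K using Nat.strong_induction_on with
  | _ K IH =>
  intro σ hK
  by_cases hbot : σ ⊥ = 0
  · by_cases hcomp : ∀ v ∈ σ.support, ∀ w ∈ σ.support, v ≤ w ∨ w ≤ v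
    · exact Submodule.subset_span ⟨σ, ⟨by simp [Finsupp.mem_support_iff, hbot], hcomp⟩, rfl⟩
    · push_neg at hcomp
      obtain ⟨y1, hy1, y2, hy2, hncomp⟩ := hcomp
      have hne12 : y1 ≠ y2 := by rintro rfl; exact hncomp.1 le_rfl
      have hy1b : y1 ≠ ⊥ := by rintro rfl; exact hncomp.1 bot_le
      have hy2b : y2 ≠ ⊥ := by rintro rfl; exact hncomp.2 bot_le
      have hσ1 : 1 ≤ σ y1 := Nat.one_le_iff_ne_zero.2 (Finsupp.mem_support_iff.1 hy1)
      have hs2 : 1 ≤ σ y2 := Nat.one_le_iff_ne_zero.2 (Finsupp.mem_support_iff.1 hy2)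
      have hσ2' : ((σ - Finsupp.single y1 1 : P →₀ ℕ)) y2 = σ y2 := by
        rw [Finsupp.tsub_apply, Finsupp.single_apply, if_neg hne12]
        simp
      have hσ2 : 1 ≤ ((σ - Finsupp.single y1 1 : P →₀ ℕ)) y2 := by
        rw [hσ2']
        exact hs2
      set σ'' := σ - Finsupp.single y1 1 - Finsupp.single y2 1 with hσ''
      have hsplit : monomial σ (1:k) = X y1 * (X y2 * monomial σ'' 1) := by
        rw [← monomial_split hσ2, ← monomial_split hσ1]
      have hσeq : σ = σ'' + Finsupp.single y1 1 + Finsupp.single y2 1 := by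
        ext w
        rw [hσ'']
        simp only [Finsupp.coe_add, Pi.add_apply, Finsupp.tsub_apply, Finsupp.single_apply]
        rcases eq_or_ne y1 w with rfl | h1
        · rw [if_pos rfl, if_neg (fun h => hne12 h.symm)]
          omega
        · rcases eq_or_ne y2 w with rfl | h2
          · rw [if_neg h1, if_pos rfl]
            omega
          · rw [if_neg h1, if_neg h2]
            omega
      by_cases hub : (upperBounds ({y1, y2} : Set P)).Nonempty
      · obtain ⟨u, hu⟩ := hub
        rw [mem_ub] at hu
        obtain ⟨m, hglb, hmV, hmu⟩ := exists_isGLB hP hinj hatom hsurj hu.1 hu.2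
        have hrel := mk_rel (k := k) ⟨u, mem_ub.2 hu⟩ hglb
        have hexpand : Ideal.Quotient.mk (faceIdeal P k) (monomial σ 1) =
            ∑ z ∈ (Set.toFinite (MUB y1 y2)).toFinset,
              Ideal.Quotient.mk (faceIdeal P k)
                (monomial (σ'' + Finsupp.single m 1 + Finsupp.single z 1) 1) := by
          have h1 : Ideal.Quotient.mk (faceIdeal P k) (monomial σ (1:k)) =
              Ideal.Quotient.mk (faceIdeal P k) (X y1 * X y2) *
              Ideal.Quotient.mk (faceIdeal P k) (monomial σ'' 1) := by
            rw [hsplit, show X y1 * (X y2 * monomial σ'' (1:k)) =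
              (X y1 * X y2) * monomial σ'' 1 from by ring, map_mul]
          rw [h1, hrel, mul_assoc, Finset.sum_mul, Finset.mul_sum]
          apply Finset.sum_congr rfl
          intro z hz
          rw [show σ'' + Finsupp.single m 1 + Finsupp.single z 1 =
              (Finsupp.single m 1 + (Finsupp.single z 1 + σ'')) from by abel]
          rw [show monomial (Finsupp.single m 1 + (Finsupp.single z 1 + σ'')) (1:k) =
              X m * (X z * monomial σ'' 1) from by
                rw [MvPolynomial.X, MvPolynomial.X, MvPolynomial.monomial_mul,
                  MvPolynomial.monomial_mul, one_mul, one_mul]]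
          rw [map_mul, map_mul]
        rw [hexpand]
        apply Submodule.sum_mem
        intro z hz
        rw [Set.Finite.mem_toFinset] at hz
        -- measure bookkeeping
        set τ := σ'' + Finsupp.single m 1 + Finsupp.single z 1 with hτ
        have hzV : VS x z = VS x y1 ∪ VS x y2 := VS_mub hP hinj hatom hsurj hz
        have hsub1 : ¬ (VS x y1 ⊆ VS x y2) := by
          intro hss
          exact hncomp.1 (le_of_VS_subset hP hinj hatom hsurj hu.1 hu.2 hss)
        have hsub2 : ¬ (VS x y2 ⊆ VS x y1) := by
          intro hss
          exact hncomp.2 (le_of_VS_subset hP hinj hatom hsurj hu.2 hu.1 hss)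
        have hcard : (VS x m).card + (VS x z).card = (VS x y1).card + (VS x y2).card := by
          rw [hmV, hzV]
          exact Finset.card_inter_add_card_union _ _
        have ha1 : (VS x m).card < (VS x y1).card := by
          rw [hmV]
          apply Finset.card_lt_card
          rw [Finset.ssubset_iff_subset_ne]
          refine ⟨Finset.inter_subset_left, ?_⟩
          intro hc
          exact hsub1 (by rw [← hc]; exact Finset.inter_subset_right)
        have ha2 : (VS x m).card < (VS x y2).card := by
          rw [hmV]
          apply Finset.card_lt_card
          rw [Finset.ssubset_iff_subset_ne]
          refine ⟨Finset.inter_subset_right, ?_⟩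
          intro hc
          exact hsub2 (by rw [← hc]; exact Finset.inter_subset_left)
        have key := sq_ineq hcard ha1 ha2
        have hMu : Mu x σ < Mu x τ := by
          rw [hτ]
          conv_lhs => rw [hσeq]
          rw [Mu_add, Mu_add, Mu_add, Mu_add, Mu_single, Mu_single,
            Mu_single, Mu_single]
          simp only [one_mul]
          omega
        have hDm : Dm x τ = Dm x σ := by
          rw [hτ]
          conv_rhs => rw [hσeq]
          rw [Dm_add, Dm_add, Dm_add, Dm_add, Dm_single, Dm_single,
            Dm_single, Dm_single]
          simp only [one_mul]
          omega
        have hτbot : τ ⊥ ≤ 1 := by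
          have hz_b : z ≠ ⊥ := by
            intro hc
            rw [hc] at hzV
            have := VS_ne_empty hP hinj hatom hsurj hy1b
            rw [VS_bot hatom] at hzV
            obtain ⟨i, hi⟩ := this
            have : i ∈ VS x y1 ∪ VS x y2 := Finset.mem_union_left _ hi
            rw [← hzV] at this
            simp at this
          have hσ''b : σ'' ⊥ = 0 := by
            rw [hσ'', Finsupp.tsub_apply, Finsupp.tsub_apply]
            omega
          rw [hτ]
          simp only [Finsupp.add_apply, Finsupp.single_apply]
          rw [hσ''b, if_neg hz_b]
          split <;> omega
        have hmeas : 3 * (n * Dm x τ - Mu x τ) + τ ⊥ ≤ K - 1 := by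
          have h1 : Mu x τ ≤ n * Dm x τ := Mu_le_nDm τ
          have h2 : Mu x σ ≤ n * Dm x σ := Mu_le_nDm σ
          have hn : n * Dm x τ = n * Dm x σ := by rw [hDm]
          omega
        have hKpos : 1 ≤ K := by
          have h1 : Mu x τ ≤ n * Dm x τ := Mu_le_nDm τ
          have hn : n * Dm x τ = n * Dm x σ := by rw [hDm]
          omega
        exact IH (K - 1) (by omega) τ hmeas
      · rw [Set.not_nonempty_iff_eq_empty] at hub
        have h12 : X y1 * (X y2 * monomial σ'' (1:k)) = (X y1 * X y2) * monomial σ'' 1 := by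
          ring
        have hz : Ideal.Quotient.mk (faceIdeal P k) (monomial σ (1:k)) =
            Ideal.Quotient.mk (faceIdeal P k) (X y1 * X y2) *
            Ideal.Quotient.mk (faceIdeal P k) (monomial σ'' 1) := by
          rw [hsplit, h12, map_mul]
        rw [hz, mk_mul_eq_zero hub, zero_mul]
        exact Submodule.zero_mem _
  · -- erase bot
    have hmeas : 3 * (n * Dm x (σ.erase ⊥) - Mu x (σ.erase ⊥)) + (σ.erase ⊥) ⊥ ≤ K - 1 := by
      have hDm : Dm x (σ.erase ⊥) = Dm x σ := by
        conv_rhs => rw [← Finsupp.erase_add_single (⊥:P) σ]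
        rw [Dm_add, Dm_single, VS_bot hatom]
        simp
      have hMu : Mu x (σ.erase ⊥) = Mu x σ := by
        conv_rhs => rw [← Finsupp.erase_add_single (⊥:P) σ]
        rw [Mu_add, Mu_single, VS_bot hatom]
        simp
      rw [hDm, hMu, Finsupp.erase_same]
      omega
    rw [mk_erase_bot]
    exact IH (K - 1) (by omega) _ hmeas

lemma straighten (σ : P →₀ ℕ) :
    Ideal.Quotient.mk (faceIdeal P k) (monomial σ 1) ∈ SStd (P := P) k :=
  straighten_aux hP hinj hatom hsurj _ σ le_rfl

end StraightenMain

end Straighten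

section Indep

variable {k : Type} [Field k] {x : Fin n → P}

lemma gam_zero : gam x (0 : P →₀ ℕ) = 0 := by
  rw [gam, Finsupp.sum_zero_index]

lemma gam_ge (σ : P →₀ ℕ) {w : P} (hw : w ∈ σ.support) {i : Fin n} (hi : i ∈ VS x w) :
    σ w ≤ gam x σ i := by
  rw [gam_apply, Finsupp.sum]
  calc σ w = σ w * (if x i ≤ w then 1 else 0) := by rw [if_pos (mem_VS.1 hi), mul_one]
    _ ≤ ∑ a ∈ σ.support, σ a * (if x i ≤ a then 1 else 0) :=
        Finset.single_le_sum (f := fun w' => σ w' * if x i ≤ w' then 1 else 0)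
          (fun w' _ => Nat.zero_le _) hw

lemma chain_top {σ : P →₀ ℕ} (hstd : Std σ) (hne : σ ≠ 0) :
    ∃ w1 ∈ σ.support, ∀ w ∈ σ.support, w ≤ w1 := by
  have hs : σ.support.Nonempty := Finsupp.support_nonempty_iff.2 hne
  obtain ⟨w1, hw1, hmax⟩ := σ.support.exists_maximal hs
  refine ⟨w1, hw1, fun w hw => ?_⟩
  rcases hstd.2 w hw w1 hw1 with h | h
  · exact h
  · rcases eq_or_lt_of_le h with h2 | h2
    · exact h2.ge
    · exact absurd h2 (not_lt_of_ge (hmax hw h2.le))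

/-- span of standard monomials at polynomial level -/
def Sspan (k : Type) [Field k] : Submodule k (MvPolynomial P k) :=
  Submodule.span k {p : MvPolynomial P k | ∃ σ, Std σ ∧ p = monomial σ 1}

lemma SStd_eq_map : SStd (P := P) k = Submodule.map (mkL) (Sspan (P := P) k) := by
  rw [Sspan, Submodule.map_span, SStd]
  congr 1
  ext r
  constructor
  · rintro ⟨σ, hσ, rfl⟩
    exact ⟨monomial σ 1, ⟨σ, hσ, rfl⟩, rfl⟩
  · rintro ⟨p, ⟨σ, hσ, rfl⟩, rfl⟩
    exact ⟨σ, hσ, rfl⟩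

section IndepMain

variable (hP : IsSimplicialPoset P) (hinj : Function.Injective x)
  (hatom : ∀ i, IsAtom (x i)) (hsurj : ∀ a : P, IsAtom a → ∃ i, x i = a)

include hP hinj hatom hsurj

lemma gam_eq_zero_iff {σ : P →₀ ℕ} (hb : (⊥:P) ∉ σ.support) (h : gam x σ = 0) :
    σ = 0 := by
  by_contra hne
  obtain ⟨w, hw⟩ := Finsupp.support_nonempty_iff.2 hne
  have hwb : w ≠ ⊥ := fun hc => hb (hc ▸ hw)
  obtain ⟨i, hi⟩ := VS_ne_empty hP hinj hatom hsurj hwb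
  have h1 := gam_ge σ hw hi
  rw [h] at h1
  simp only [Finsupp.coe_zero, Pi.zero_apply] at h1
  exact (Finsupp.mem_support_iff.1 hw) (Nat.le_zero.1 h1)

lemma gam_support {σ : P →₀ ℕ} (hstd : Std σ) {w1 : P} (hw1 : w1 ∈ σ.support)
    (htop : ∀ w ∈ σ.support, w ≤ w1) (i : Fin n) :
    gam x σ i ≠ 0 ↔ i ∈ VS x w1 := by
  constructor
  · intro h
    rw [gam_apply, Finsupp.sum] at h
    obtain ⟨w, hw, hwne⟩ := Finset.exists_ne_zero_of_sum_ne_zero h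
    have : x i ≤ w := by
      by_contra hc
      rw [if_neg hc, mul_zero] at hwne
      exact hwne rfl
    exact mem_VS.2 (this.trans (htop w hw))
  · intro hi
    have h1 := gam_ge σ hw1 hi
    have h2 := Finsupp.mem_support_iff.1 hw1
    omega

lemma exists_pure_index {σ : P →₀ ℕ} (hstd : Std σ) {w1 : P} (hw1 : w1 ∈ σ.support)
    (htop : ∀ w ∈ σ.support, w ≤ w1) :
    ∃ i ∈ VS x w1, gam x σ i = σ w1 := by
  have hw1b : w1 ≠ ⊥ := fun hc => hstd.1 (hc ▸ hw1)
  rcases Finset.eq_empty_or_nonempty (σ.support.erase w1) with hs | hs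
  · obtain ⟨i, hi⟩ := VS_ne_empty hP hinj hatom hsurj hw1b
    refine ⟨i, hi, ?_⟩
    rw [gam_apply, Finsupp.sum]
    have hsupp : σ.support = {w1} := by
      apply Finset.eq_singleton_iff_unique_mem.2
      exact ⟨hw1, fun w hw => by
        by_contra hne
        exact Finset.notMem_empty w (hs ▸ Finset.mem_erase.2 ⟨hne, hw⟩)⟩
    rw [hsupp, Finset.sum_singleton, if_pos (mem_VS.1 hi), mul_one]
  · obtain ⟨w2, hw2, hmax2⟩ := (σ.support.erase w1).exists_maximal hs
    have hw2s : w2 ∈ σ.support := Finset.mem_of_mem_erase hw2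
    have hw2ne : w2 ≠ w1 := Finset.ne_of_mem_erase hw2
    have hw2lt : w2 < w1 := lt_of_le_of_ne (htop w2 hw2s) hw2ne
    have htop2 : ∀ w ∈ σ.support.erase w1, w ≤ w2 := by
      intro w hw
      have hws : w ∈ σ.support := Finset.mem_of_mem_erase hw
      rcases hstd.2 w hws w2 hw2s with h | h
      · exact h
      · rcases eq_or_lt_of_le h with h2 | h2
        · exact h2.ge
        · exact absurd h2 (not_lt_of_ge (hmax2 hw h2.le))
    have hVne : VS x w2 ≠ VS x w1 := by
      intro hc
      exact hw2ne (VS_inj_le hP hinj hatom hsurj hw2lt.le le_rfl hc)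
    obtain ⟨i, hi1, hi2⟩ := Finset.exists_of_ssubset
      (Finset.ssubset_iff_subset_ne.2 ⟨VS_mono hw2lt.le, hVne⟩)
    refine ⟨i, hi1, ?_⟩
    rw [gam_apply, Finsupp.sum]
    rw [Finset.sum_eq_single_of_mem w1 hw1]
    · rw [if_pos (mem_VS.1 hi1), mul_one]
    · intro w hw hwne
      have hww2 : w ≤ w2 := htop2 w (Finset.mem_erase.2 ⟨hwne, hw⟩)
      rw [if_neg, mul_zero]
      intro hc
      exact hi2 (VS_mono hww2 (mem_VS.2 hc))

lemma chain_eq (Y : P) : ∀ (N : ℕ) (σ1 σ2 : P →₀ ℕ), σ1.support.card ≤ N →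
    Std σ1 → Std σ2 →
    (∀ w ∈ σ1.support, w ≤ Y) → (∀ w ∈ σ2.support, w ≤ Y) →
    gam x σ1 = gam x σ2 → σ1 = σ2 := by
  intro N
  induction N with
  | zero =>
    intro σ1 σ2 hcard h1 h2 hY1 hY2 hg
    have hσ1 : σ1 = 0 := by
      rw [← Finsupp.support_eq_empty]
      exact Finset.card_eq_zero.1 (Nat.le_zero.1 hcard)
    subst hσ1
    rw [gam_zero] at hg
    exact (gam_eq_zero_iff hP hinj hatom hsurj h2.1 hg.symm).symm
  | succ N IH =>
    intro σ1 σ2 hcard h1 h2 hY1 hY2 hg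
    rcases eq_or_ne σ1 0 with rfl | hne1
    · rw [gam_zero] at hg
      exact (gam_eq_zero_iff hP hinj hatom hsurj h2.1 hg.symm).symm
    have hne2 : σ2 ≠ 0 := by
      rintro rfl
      rw [gam_zero] at hg
      exact hne1 (gam_eq_zero_iff hP hinj hatom hsurj h1.1 hg)
    obtain ⟨w1, hw1, htop1⟩ := chain_top h1 hne1
    obtain ⟨w2, hw2, htop2⟩ := chain_top h2 hne2
    have hVeq : VS x w1 = VS x w2 := by
      ext i
      rw [← gam_support hP hinj hatom hsurj h1 hw1 htop1,
        ← gam_support hP hinj hatom hsurj h2 hw2 htop2, hg]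
    have hww : w1 = w2 := VS_inj_le hP hinj hatom hsurj (hY1 w1 hw1) (hY2 w2 hw2) hVeq
    subst hww
    -- multiplicities agree
    obtain ⟨i1, hi1, hpi1⟩ := exists_pure_index hP hinj hatom hsurj h1 hw1 htop1
    obtain ⟨i2, hi2, hpi2⟩ := exists_pure_index hP hinj hatom hsurj h2 hw2 htop2
    have hp : σ1 w1 = σ2 w1 := by
      have ha : σ1 w1 ≤ σ2 w1 := by
        rw [← hpi2, ← hg]
        exact gam_ge σ1 hw1 (hVeq ▸ hi2)
      have hb : σ2 w1 ≤ σ1 w1 := by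
        rw [← hpi1, hg]
        exact gam_ge σ2 hw2 hi1
      omega
    -- erase and recurse
    have herase : ∀ (σ : P →₀ ℕ), gam x σ = gam x (σ.erase w1) + (σ w1) • gsum (VS x w1) := by
      intro σ
      conv_lhs => rw [← Finsupp.erase_add_single w1 σ]
      rw [gam_add, gam_single]
    have hg' : gam x (σ1.erase w1) = gam x (σ2.erase w1) := by
      have e1 := herase σ1
      have e2 := herase σ2
      rw [e1, e2, hp] at hg
      exact add_right_cancel hg
    have hmem_erase : ∀ (σ : P →₀ ℕ) (v : P), v ∈ (σ.erase w1).support → v ∈ σ.support := by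
      intro σ v hv
      rw [Finsupp.support_erase] at hv
      exact Finset.mem_of_mem_erase hv
    have hstd' : ∀ (σ : P →₀ ℕ), Std σ → Std (σ.erase w1) := by
      intro σ hs
      constructor
      · intro hc
        exact hs.1 (hmem_erase _ _ hc)
      · intro v hv w hw
        exact hs.2 v (hmem_erase _ _ hv) w (hmem_erase _ _ hw)
    have hcard' : (σ1.erase w1).support.card ≤ N := by
      rw [Finsupp.support_erase]
      have := Finset.card_erase_of_mem hw1
      omega
    have heq := IH (σ1.erase w1) (σ2.erase w1) hcard' (hstd' _ h1) (hstd' _ h2)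
      (fun w hw => hY1 w (hmem_erase _ _ hw))
      (fun w hw => hY2 w (hmem_erase _ _ hw)) hg'
    have : σ1.erase w1 + Finsupp.single w1 (σ1 w1) =
        σ2.erase w1 + Finsupp.single w1 (σ2 w1) := by
      rw [heq, hp]
    rw [Finsupp.erase_add_single, Finsupp.erase_add_single] at this
    exact this

lemma indep {p : MvPolynomial P k} (hstd : ∀ σ ∈ p.support, Std σ)
    (hzero : ∀ y, phi k x y p = 0) : p = 0 := by
  by_contra hne
  obtain ⟨σs, hσs⟩ := MvPolynomial.support_nonempty.2 hne
  -- find a top bound y* for σs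
  have hY : ∃ Y : P, ∀ w ∈ σs.support, w ≤ Y := by
    rcases eq_or_ne σs 0 with rfl | hne0
    · exact ⟨⊥, by simp⟩
    · obtain ⟨w1, hw1, htop⟩ := chain_top (hstd σs hσs) hne0
      exact ⟨w1, htop⟩
  obtain ⟨Y, hYtop⟩ := hY
  have hphi := hzero Y
  have hterm : ∀ σ ∈ p.support,
      coeff (gam x σs) (phi k x Y (monomial σ (coeff σ p))) =
        if (∀ w ∈ σ.support, w ≤ Y) ∧ gam x σ = gam x σs then coeff σ p else 0 := by
    intro σ _
    rw [phi_monomial]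
    split
    · rename_i hcond
      rw [MvPolynomial.coeff_monomial]
      split_ifs with h1 h2 h2
      · rfl
      · exact absurd ⟨hcond, h1⟩ h2
      · exact absurd h2.2 h1
      · rfl
    · rename_i hcond
      rw [MvPolynomial.coeff_zero, if_neg]
      intro hc
      exact hcond hc.1
  have hcoeff : coeff (gam x σs) (phi k x Y p) = coeff σs p := by
    conv_lhs => rw [MvPolynomial.as_sum p, map_sum, MvPolynomial.coeff_sum]
    rw [Finset.sum_congr rfl hterm]
    rw [Finset.sum_eq_single_of_mem σs hσs]
    · rw [if_pos ⟨hYtop, rfl⟩]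
    · intro σ hσ hσne
      rw [if_neg]
      rintro ⟨hcond, hgam⟩
      exact hσne (chain_eq hP hinj hatom hsurj Y σ.support.card σ σs le_rfl
        (hstd σ hσ) (hstd σs hσs) hcond hYtop hgam)
  rw [hphi, MvPolynomial.coeff_zero] at hcoeff
  exact (Finsupp.mem_support_iff.1 hσs) hcoeff.symm

lemma ker_phi {r : MvPolynomial P k} (h : ∀ y, phi k x y r = 0) :
    r ∈ faceIdeal P k := by
  have hmem : Ideal.Quotient.mk (faceIdeal P k) r ∈ SStd (P := P) k := by
    rw [show r = ∑ σ ∈ r.support, monomial σ (coeff σ r) from MvPolynomial.as_sum r, map_sum]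
    apply Submodule.sum_mem
    intro σ hσ
    have h1 : monomial σ (coeff σ r) = (coeff σ r) • monomial σ (1:k) := by
      rw [smul_monomial, smul_eq_mul, mul_one]
    have h2 : Ideal.Quotient.mk (faceIdeal P k) ((coeff σ r) • monomial σ (1:k)) =
        (coeff σ r) • Ideal.Quotient.mk (faceIdeal P k) (monomial σ (1:k)) := by
      rw [← mkL_apply, ← mkL_apply, map_smul]
    rw [h1, h2]
    exact Submodule.smul_mem _ _ (straighten hP hinj hatom hsurj σ)
  rw [SStd_eq_map] at hmem
  obtain ⟨s, hs, hmk⟩ := hmem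
  rw [mkL_apply] at hmk
  have hsub : r - s ∈ faceIdeal P k := Ideal.Quotient.eq.1 hmk.symm
  have hphis : ∀ y, phi k x y s = 0 := by
    intro y
    have h1 := phi_ker hP hinj hatom hsurj hsub y
    rw [map_sub, h y, zero_sub, neg_eq_zero] at h1
    exact h1
  have hs0 : s = 0 := by
    apply indep hP hinj hatom hsurj _ hphis
    intro σ hσ
    exact (mem_span_monomials Std s).1 hs σ hσ
  rw [hs0, sub_zero] at hsub
  exact hsub

end IndepMain

end Indep

section Graded

variable {k : Type} [Field k] {x : Fin n → P}

lemma facePiece_congr {β β' : Fin n → ℤ} (h : ∀ l, β l = β' l) :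
    facePiece P k n x β = facePiece P k n x β' := by
  rw [show β = β' from funext h]

lemma exists_ge_atom {σ : P →₀ ℕ} {j : Fin n} (h : 1 ≤ degm x σ j) :
    ∃ w ∈ σ.support, x j ≤ w := by
  by_contra hc
  push_neg at hc
  rw [degm] at h
  rw [Finset.sum_eq_zero (fun w hw => if_neg (hc w hw))] at h
  omega

section GradedMain

variable (hP : IsSimplicialPoset P) (hinj : Function.Injective x)
  (hatom : ∀ i, IsAtom (x i)) (hsurj : ∀ a : P, IsAtom a → ∃ i, x i = a)

include hP hinj hatom hsurj

lemma mul_piece (β : Fin n → ℤ) (i : Fin n) (m : ℕ) {a : FaceRing P k}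
    (ha : a ∈ facePiece P k n x β) :
    (fv P k (x i)) ^ m * a ∈ facePiece P k n x (fun l => β l + if l = i then (m:ℤ) else 0) := by
  induction ha using Submodule.span_induction with
  | mem r hr =>
    obtain ⟨σ, hσ, rfl⟩ := hr
    have h1 : (fv P k (x i)) ^ m * Ideal.Quotient.mk (faceIdeal P k) (monomial σ 1) =
        Ideal.Quotient.mk (faceIdeal P k) (monomial (Finsupp.single (x i) m + σ) 1) := by
      rw [fv, ← map_pow, ← map_mul, MvPolynomial.X_pow_eq_monomial,
        MvPolynomial.monomial_mul, one_mul]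
    rw [h1]
    apply mem_facePiece_of
    rw [degm_add, degm_single_atom hinj hatom]
    funext l
    rw [Pi.add_apply, show degm x σ l = β l from hσ l]
    ring
  | zero =>
    rw [mul_zero]
    exact Submodule.zero_mem _
  | add a b _ _ ha hb =>
    rw [mul_add]
    exact Submodule.add_mem _ ha hb
  | smul c a _ ha =>
    rw [mul_smul_comm]
    exact Submodule.smul_mem _ _ ha

lemma piece_inj (β : Fin n → ℤ) (j : Fin n) (hβ : 1 ≤ β j) (m : ℕ) {a : FaceRing P k}
    (ha : a ∈ facePiece P k n x β) (h0 : (fv P k (x j)) ^ m * a = 0) : a = 0 := by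
  rw [facePiece_eq] at ha
  obtain ⟨r, hr, rfl⟩ := ha
  rw [mkL_apply] at h0 ⊢
  have hXr : X (x j) ^ m * r ∈ faceIdeal P k := by
    rw [← Ideal.Quotient.eq_zero_iff_mem, map_mul, map_pow]
    exact h0
  have hphi : ∀ y, phi k x y r = 0 := by
    intro y
    by_cases hy : x j ≤ y
    · have h1 := phi_ker hP hinj hatom hsurj hXr y
      rw [map_mul, map_pow] at h1
      have h2 : phi k x y (X (x j)) = X j := by
        rw [phi, MvPolynomial.aeval_X, if_pos hy, VS_atom hP hinj hatom hsurj, Finset.prod_singleton]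
      rw [h2] at h1
      rcases mul_eq_zero.1 h1 with h3 | h3
      · exact absurd h3 (pow_ne_zero m (MvPolynomial.X_ne_zero j))
      · exact h3
    · rw [show r = ∑ σ ∈ r.support, monomial σ (coeff σ r) from MvPolynomial.as_sum r,
        map_sum]
      apply Finset.sum_eq_zero
      intro σ hσ
      rw [phi_monomial, if_neg]
      intro hall
      have hdeg : degm x σ = β := (mem_Rpiece_iff β r).1 hr σ hσ
      have : 1 ≤ degm x σ j := by rw [hdeg]; exact hβ
      obtain ⟨w, hw, hjw⟩ := exists_ge_atom this
      exact hy (hjw.trans (hall w hw))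
  rw [Ideal.Quotient.eq_zero_iff_mem]
  exact ker_phi hP hinj hatom hsurj hphi

lemma div_mono (γ : Fin n → ℤ) (j : Fin n) (hγ : 2 ≤ γ j) :
    ∀ (M : ℕ) (σ : P →₀ ℕ), degm x σ = γ →
    (∃ y ∈ σ.support, x j ≤ y ∧ (VS x y).card ≤ M) →
    Ideal.Quotient.mk (faceIdeal P k) (monomial σ 1) ∈
      Submodule.map (LinearMap.mulLeft k (fv P k (x j)))
        (facePiece P k n x (fun l => γ l - if l = j then 1 else 0)) := by
  intro M
  induction M with
  | zero =>
    rintro σ hdeg ⟨y, hy, hjy, hcard⟩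
    exfalso
    have : j ∈ VS x y := mem_VS.2 hjy
    have := Finset.card_pos.2 ⟨j, this⟩
    omega
  | succ M IH =>
    rintro σ hdeg ⟨y0, hy0, hjy0, hcard0⟩
    by_cases hxj : x j ∈ σ.support
    · -- direct division
      have h1 : 1 ≤ σ (x j) := Nat.one_le_iff_ne_zero.2 (Finsupp.mem_support_iff.1 hxj)
      have hsplit := monomial_split (k := k) h1
      set σ' := σ - Finsupp.single (x j) 1 with hσ'
      refine ⟨Ideal.Quotient.mk (faceIdeal P k) (monomial σ' 1), ?_, ?_⟩
      · apply mem_facePiece_of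
        have hadd : σ = Finsupp.single (x j) 1 + σ' := by
          rw [hσ', add_comm]
          exact (tsub_add_cancel_of_le (Finsupp.single_le_iff.2 h1)).symm
        have := congrArg (degm x) hadd
        rw [degm_add, hdeg, degm_single_atom hinj hatom] at this
        funext l
        have hl := congrFun this l
        rw [Pi.add_apply] at hl
        rw [hl]
        push_cast
        ring
      · rw [LinearMap.mulLeft_apply, fv, ← map_mul, ← hsplit]
    · -- x j not in support: find faces above x j
      have hy0j : y0 ≠ x j := fun hc => hxj (hc ▸ hy0)
      -- a handler for the comparable case
      have hCOMP : ∀ (a b : P), x j ≤ a → a ≤ b → 1 ≤ σ a →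
          1 ≤ ((σ - Finsupp.single a 1 : P →₀ ℕ)) b →
          Ideal.Quotient.mk (faceIdeal P k) (monomial σ 1) ∈
            Submodule.map (LinearMap.mulLeft k (fv P k (x j)))
              (facePiece P k n x (fun l => γ l - if l = j then 1 else 0)) := by
        intro a b hja hab ha1 hb1
        have hjb : x j ≤ b := hja.trans hab
        have hjVa : j ∈ VS x a := mem_VS.2 hja
        obtain ⟨a', ha'le, ha'V⟩ := exists_face hP hinj hatom hsurj
          (u := a) (S := VS x a \ {j}) (Finset.sdiff_subset)
        have hja' : ¬ x j ≤ a' := by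
          intro hc
          have := mem_VS.2 hc
          rw [ha'V, Finset.mem_sdiff] at this
          exact this.2 (Finset.mem_singleton_self j)
        have hglb : IsGLB {x j, a'} (⊥ : P) := by
          constructor
          · intro l hl
            exact bot_le
          · intro l hl
            have h1 : l ≤ x j := hl (by simp)
            have h2 : l ≤ a' := hl (by simp)
            rcases (hatom j).le_iff.1 h1 with h3 | h3
            · exact h3.le
            · rw [h3] at h2
              exact absurd h2 hja'
        have hub : (upperBounds ({x j, a'} : Set P)).Nonempty :=
          ⟨a, mem_ub.2 ⟨hja, ha'le⟩⟩
        have hamub : a ∈ MUB (x j) a' := by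
          refine ⟨mem_ub.2 ⟨hja, ha'le⟩, ?_⟩
          intro z' hz' hz'a
          rw [mem_ub] at hz'
          apply VS_inj_le hP hinj hatom hsurj hz'a le_rfl
          apply Finset.Subset.antisymm (VS_mono hz'a)
          intro i hi
          rcases eq_or_ne i j with rfl | hij
          · exact mem_VS.2 hz'.1
          · have : i ∈ VS x a' := by
              rw [ha'V, Finset.mem_sdiff]
              exact ⟨hi, by simp [hij]⟩
            exact VS_mono hz'.2 this
        have hVz : ∀ z ∈ MUB (x j) a', VS x z = VS x a := by
          intro z hz
          rw [VS_mub hP hinj hatom hsurj hz, VS_atom hP hinj hatom hsurj, ha'V]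
          ext i
          rw [Finset.mem_union, Finset.mem_sdiff, Finset.mem_singleton]
          constructor
          · rintro (rfl | ⟨h, _⟩)
            · exact hjVa
            · exact h
          · intro hi
            rcases eq_or_ne i j with rfl | hij
            · exact Or.inl rfl
            · exact Or.inr ⟨hi, hij⟩
        have hzb0 : ∀ z ∈ MUB (x j) a', z ≠ a →
            Ideal.Quotient.mk (faceIdeal P k) (X z * X b) = 0 := by
          intro z hz hzne
          apply mk_mul_eq_zero
          rw [Set.eq_empty_iff_forall_notMem]
          intro u hu
          rw [mem_ub] at hu
          have hau : a ≤ u := hab.trans hu.2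
          exact hzne (VS_inj_le hP hinj hatom hsurj hu.1 hau
            ((hVz z hz).trans (VS_inj_le hP hinj hatom hsurj hau hau rfl ▸ rfl)))
        set σ1 := σ - Finsupp.single a 1 with hσ1
        have hadd : σ = Finsupp.single a 1 + σ1 := by
          rw [hσ1, add_comm]
          exact (tsub_add_cancel_of_le (Finsupp.single_le_iff.2 ha1)).symm
        have hsplit : monomial σ (1:k) = X a * monomial σ1 1 := monomial_split ha1
        have hrel := mk_rel (k := k) hub hglb
        rw [mk_X_bot, one_mul] at hrel
        have hfin : a ∈ (Set.toFinite (MUB (x j) a')).toFinset :=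
          (Set.Finite.mem_toFinset _).2 hamub
        have hXa : Ideal.Quotient.mk (faceIdeal P k) (X a) =
            Ideal.Quotient.mk (faceIdeal P k) (X (x j)) *
              Ideal.Quotient.mk (faceIdeal P k) (X a') -
            ∑ z ∈ ((Set.toFinite (MUB (x j) a')).toFinset.erase a),
              Ideal.Quotient.mk (faceIdeal P k) (X z) := by
          have h4 := Finset.add_sum_erase _
            (fun z => Ideal.Quotient.mk (faceIdeal P k) (X z)) hfin
          rw [map_mul] at hrel
          exact eq_sub_of_add_eq (h4.trans hrel.symm)
        -- split off b from σ1
        set σ2 := σ1 - Finsupp.single b 1 with hσ2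
        have hsplit2 : monomial σ1 (1:k) = X b * monomial σ2 1 := monomial_split hb1
        have hzero : ∀ z ∈ ((Set.toFinite (MUB (x j) a')).toFinset.erase a),
            Ideal.Quotient.mk (faceIdeal P k) (X z) *
              Ideal.Quotient.mk (faceIdeal P k) (monomial σ1 1) = 0 := by
          intro z hz
          have hz' := (Set.Finite.mem_toFinset _).1 (Finset.mem_of_mem_erase hz)
          have hzne := Finset.ne_of_mem_erase hz
          rw [hsplit2, map_mul, ← mul_assoc, ← map_mul, hzb0 z hz' hzne, zero_mul]
        have hkey : Ideal.Quotient.mk (faceIdeal P k) (monomial σ 1) =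
            fv P k (x j) *
              Ideal.Quotient.mk (faceIdeal P k)
                (monomial (Finsupp.single a' 1 + σ1) 1) := by
          rw [hsplit, map_mul, hXa, sub_mul, Finset.sum_mul,
            Finset.sum_congr rfl hzero, Finset.sum_const_zero, sub_zero,
            mul_assoc, fv, ← map_mul]
          congr 2
          rw [MvPolynomial.X, MvPolynomial.monomial_mul, one_mul]
        rw [hkey]
        refine ⟨Ideal.Quotient.mk (faceIdeal P k) (monomial (Finsupp.single a' 1 + σ1) 1),
          ?_, rfl⟩
        apply mem_facePiece_of
        have hd1 : degm x σ1 = fun l => γ l - if x l ≤ a then 1 else 0 := by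
          have := congrArg (degm x) hadd
          rw [degm_add, hdeg, degm_single] at this
          funext l
          have hl := congrFun this l
          rw [Pi.add_apply] at hl
          rw [hl]
          push_cast
          ring
        rw [degm_add, degm_single, hd1]
        funext l
        rw [Pi.add_apply]
        have hiff : x l ≤ a' ↔ (x l ≤ a ∧ l ≠ j) := by
          rw [← mem_VS, ha'V, Finset.mem_sdiff, mem_VS, Finset.mem_singleton]
        rcases eq_or_ne l j with rfl | hlj
        · rw [if_pos rfl, if_neg (fun hc => (hiff.1 hc).2 rfl), if_pos hja]
          ring
        · rw [if_neg hlj]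
          by_cases hla : x l ≤ a
          · rw [if_pos (hiff.2 ⟨hla, hlj⟩), if_pos hla]
            ring
          · rw [if_neg (fun hc => hla (hiff.1 hc).1), if_neg hla]
            ring
      -- find the second face
      have hsecond : (2 ≤ σ y0) ∨ (∃ y2 ∈ σ.support, x j ≤ y2 ∧ y2 ≠ y0) := by
        by_contra hc
        push_neg at hc
        have hγj := congrFun hdeg j
        rw [degm] at hγj
        rw [Finset.sum_eq_single_of_mem y0 hy0 (fun w hw hwne => by
          rw [if_neg]
          intro hjw
          exact hwne (hc.2 w hw hjw))] at hγj
        rw [if_pos hjy0] at hγj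
        have : σ y0 ≤ 1 := by omega
        have : (σ y0 : ℤ) ≤ 1 := by exact_mod_cast this
        omega
      rcases hsecond with h2 | ⟨y2, hy2, hjy2, hy2ne⟩
      · -- a = b = y0
        apply hCOMP y0 y0 hjy0 le_rfl (by omega)
        rw [Finsupp.tsub_apply, Finsupp.single_apply, if_pos rfl]
        omega
      · by_cases hle : y0 ≤ y2
        · apply hCOMP y0 y2 hjy0 hle (Nat.one_le_iff_ne_zero.2 (Finsupp.mem_support_iff.1 hy0))
          rw [Finsupp.tsub_apply, Finsupp.single_apply, if_neg (fun hc => hy2ne hc.symm)]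
          have := Nat.one_le_iff_ne_zero.2 (Finsupp.mem_support_iff.1 hy2)
          omega
        · by_cases hcomp : y2 ≤ y0
          · apply hCOMP y2 y0 hjy2 hcomp (Nat.one_le_iff_ne_zero.2 (Finsupp.mem_support_iff.1 hy2))
            rw [Finsupp.tsub_apply, Finsupp.single_apply, if_neg (fun hc => hy2ne hc)]
            have := Nat.one_le_iff_ne_zero.2 (Finsupp.mem_support_iff.1 hy0)
            omega
          · -- incomparable case
            have hncomp1 : ¬ y0 ≤ y2 := hle
            have hσy0 : 1 ≤ σ y0 := Nat.one_le_iff_ne_zero.2 (Finsupp.mem_support_iff.1 hy0)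
            have hσ12 : 1 ≤ ((σ - Finsupp.single y0 1 : P →₀ ℕ)) y2 := by
              rw [Finsupp.tsub_apply, Finsupp.single_apply, if_neg (fun hc => hy2ne hc.symm)]
              have := Nat.one_le_iff_ne_zero.2 (Finsupp.mem_support_iff.1 hy2)
              omega
            set σ1 := σ - Finsupp.single y0 1 with hσ1
            set σ2 := σ1 - Finsupp.single y2 1 with hσ2
            have hsplit : monomial σ (1:k) = X y0 * (X y2 * monomial σ2 1) := by
              rw [← monomial_split hσ12, ← monomial_split hσy0]
            have hadd : σ = σ2 + Finsupp.single y0 1 + Finsupp.single y2 1 := by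
              ext w
              rw [hσ2, hσ1]
              simp only [Finsupp.coe_add, Pi.add_apply, Finsupp.tsub_apply,
                Finsupp.single_apply]
              rcases eq_or_ne y0 w with rfl | h1
              · rw [if_pos rfl, if_neg (fun h => hy2ne h)]
                omega
              · rcases eq_or_ne y2 w with rfl | h2
                · rw [if_neg h1, if_pos rfl]
                  have := Nat.one_le_iff_ne_zero.2 (Finsupp.mem_support_iff.1 hy2)
                  omega
                · rw [if_neg h1, if_neg h2]
                  omega
            by_cases hub : (upperBounds ({y0, y2} : Set P)).Nonempty
            · obtain ⟨u, hu⟩ := hub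
              rw [mem_ub] at hu
              obtain ⟨m, hglb, hmV, hmu⟩ := exists_isGLB hP hinj hatom hsurj hu.1 hu.2
              have hrel := mk_rel (k := k) ⟨u, mem_ub.2 hu⟩ hglb
              have hexpand : Ideal.Quotient.mk (faceIdeal P k) (monomial σ 1) =
                  ∑ z ∈ (Set.toFinite (MUB y0 y2)).toFinset,
                    Ideal.Quotient.mk (faceIdeal P k)
                      (monomial (σ2 + Finsupp.single m 1 + Finsupp.single z 1) 1) := by
                have h1 : Ideal.Quotient.mk (faceIdeal P k) (monomial σ (1:k)) =
                    Ideal.Quotient.mk (faceIdeal P k) (X y0 * X y2) *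
                    Ideal.Quotient.mk (faceIdeal P k) (monomial σ2 1) := by
                  rw [hsplit, show X y0 * (X y2 * monomial σ2 (1:k)) =
                    (X y0 * X y2) * monomial σ2 1 from by ring, map_mul]
                rw [h1, hrel, mul_assoc, Finset.sum_mul, Finset.mul_sum]
                apply Finset.sum_congr rfl
                intro z hz
                rw [show σ2 + Finsupp.single m 1 + Finsupp.single z 1 =
                    (Finsupp.single m 1 + (Finsupp.single z 1 + σ2)) from by abel]
                rw [show monomial (Finsupp.single m 1 + (Finsupp.single z 1 + σ2)) (1:k) =
                    X m * (X z * monomial σ2 1) from by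
                      rw [MvPolynomial.X, MvPolynomial.X, MvPolynomial.monomial_mul,
                        MvPolynomial.monomial_mul, one_mul, one_mul]]
                rw [map_mul, map_mul]
              rw [hexpand]
              apply Submodule.sum_mem
              intro z hz
              rw [Set.Finite.mem_toFinset] at hz
              have hzV : VS x z = VS x y0 ∪ VS x y2 := VS_mub hP hinj hatom hsurj hz
              have hjm : x j ≤ m := by
                apply hglb.2
                intro l hl
                simp only [Set.mem_insert_iff, Set.mem_singleton_iff] at hl
                rcases hl with rfl | rfl
                · exact hjy0
                · exact hjy2
              have hmVlt : (VS x m).card < (VS x y0).card := by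
                rw [hmV]
                apply Finset.card_lt_card
                rw [Finset.ssubset_iff_subset_ne]
                refine ⟨Finset.inter_subset_left, ?_⟩
                intro hc
                apply hncomp1
                apply le_of_VS_subset hP hinj hatom hsurj hu.1 hu.2
                rw [← hc]
                exact Finset.inter_subset_right
              set τ := σ2 + Finsupp.single m 1 + Finsupp.single z 1 with hτ
              have hdegτ : degm x τ = γ := by
                have hd : degm x τ = degm x σ := by
                  rw [hτ]
                  conv_rhs => rw [hadd]
                  rw [degm_add, degm_add, degm_add, degm_add, degm_single, degm_single,
                    degm_single, degm_single]
                  funext l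
                  simp only [Pi.add_apply]
                  have hcases : ((if x l ≤ m then (1:ℤ) else 0) + (if x l ≤ z then (1:ℤ) else 0))
                      = ((if x l ≤ y0 then (1:ℤ) else 0) + (if x l ≤ y2 then (1:ℤ) else 0)) := by
                    have hm : x l ≤ m ↔ (l ∈ VS x y0 ∧ l ∈ VS x y2) := by
                      rw [← mem_VS, hmV, Finset.mem_inter]
                    have hz2 : x l ≤ z ↔ (l ∈ VS x y0 ∨ l ∈ VS x y2) := by
                      rw [← mem_VS, hzV, Finset.mem_union]
                    rw [← mem_VS (w := y0), ← mem_VS (w := y2)]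
                    by_cases h1 : l ∈ VS x y0 <;> by_cases h2 : l ∈ VS x y2 <;>
                      simp [hm, hz2, h1, h2]
                  push_cast
                  rw [add_assoc, add_assoc, hcases]
                rw [hd, hdeg]
              apply IH τ hdegτ
              refine ⟨m, ?_, hjm, by omega⟩
              rw [Finsupp.mem_support_iff, hτ]
              simp only [Finsupp.coe_add, Pi.add_apply, Finsupp.single_eq_same]
              omega
            · rw [Set.not_nonempty_iff_eq_empty] at hub
              have hz : Ideal.Quotient.mk (faceIdeal P k) (monomial σ (1:k)) =
                  Ideal.Quotient.mk (faceIdeal P k) (X y0 * X y2) *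
                  Ideal.Quotient.mk (faceIdeal P k) (monomial σ2 1) := by
                rw [hsplit, show X y0 * (X y2 * monomial σ2 (1:k)) =
                  (X y0 * X y2) * monomial σ2 1 from by ring, map_mul]
              rw [hz, mk_mul_eq_zero hub, zero_mul]
              exact Submodule.zero_mem _

lemma div_pieces (γ : Fin n → ℤ) (j : Fin n) (hγ : 2 ≤ γ j) :
    facePiece P k n x γ ≤
      Submodule.map (LinearMap.mulLeft k (fv P k (x j)))
        (facePiece P k n x (fun l => γ l - if l = j then 1 else 0)) := by
  rw [facePiece]
  apply Submodule.span_le.2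
  rintro r ⟨σ, hσ, rfl⟩
  have hdeg : degm x σ = γ := funext hσ
  have h1 : 1 ≤ degm x σ j := by rw [hdeg]; omega
  obtain ⟨y, hy, hjy⟩ := exists_ge_atom h1
  exact div_mono hP hinj hatom hsurj γ j hγ (VS x y).card σ hdeg ⟨y, hy, hjy, le_rfl⟩

lemma pow_div (β : Fin n → ℤ) (j : Fin n) (hβ : 1 ≤ β j) (m : ℕ) :
    facePiece P k n x (fun l => β l + if l = j then (m:ℤ) else 0) ≤
      Submodule.map (LinearMap.mulLeft k ((fv P k (x j)) ^ m)) (facePiece P k n x β) := by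
  induction m with
  | zero =>
    rw [facePiece_congr (β' := β) (fun l => by simp)]
    intro a ha
    exact ⟨a, ha, by rw [LinearMap.mulLeft_apply, pow_zero, one_mul]⟩
  | succ m IH =>
    intro a ha
    have h2 : 2 ≤ (fun l => β l + if l = j then ((m+1 : ℕ):ℤ) else 0) j := by
      simp only [if_pos rfl]
      push_cast
      omega
    obtain ⟨u, hu, hmul⟩ := div_pieces hP hinj hatom hsurj _ j h2 ha
    rw [facePiece_congr (β' := fun l => β l + if l = j then (m:ℤ) else 0)
      (fun l => by
        by_cases h : l = j
        · subst h
          simp only [if_pos rfl]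
          push_cast
          ring
        · simp [h])] at hu
    obtain ⟨w, hw, hw2⟩ := IH hu
    refine ⟨w, hw, ?_⟩
    rw [LinearMap.mulLeft_apply] at hmul hw2 ⊢
    rw [← hmul, ← hw2, pow_succ, mul_comm ((fv P k (x j))^m), mul_assoc]

end GradedMain

end Graded

section Assembly

variable {k : Type} [Field k] {x : Fin n → P}

lemma koszulD_apply (ℓ : ℕ) (f : KCochain P k n) (G : Finset (Fin n)) :
    koszulD P k n x ℓ f G =
      ∑ j ∈ G, ((-1 : k) ^ ((G.filter fun i => i < j).card)) •
        ((fv P k (x j)) ^ ℓ * f (G.erase j)) := by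
  rw [koszulD, LinearMap.pi_apply, LinearMap.sum_apply]
  apply Finset.sum_congr rfl
  intro i _
  rw [LinearMap.smul_apply, LinearMap.comp_apply, LinearMap.mulLeft_apply]
  rfl

lemma erase_insert_comm' {G : Finset (Fin n)} {i j : Fin n} (h : i ≠ j) :
    (insert j G).erase i = insert j (G.erase i) := by
  ext a
  simp only [Finset.mem_erase, Finset.mem_insert]
  constructor
  · rintro ⟨ha, rfl | hG⟩
    · exact Or.inl rfl
    · exact Or.inr ⟨ha, hG⟩
  · rintro (rfl | ⟨ha, hG⟩)
    · exact ⟨fun hc => h hc.symm, Or.inl rfl⟩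
    · exact ⟨ha, Or.inr hG⟩

end Assembly

end SPaux

/-- If `-ℓ ≤ αᵢ` for all `i` and `αⱼ > 0` for some `j`, then
`Ext_A^t(A/m_ℓ, A_P)_α = 0` for all `t`. -/
theorem extPiece_vanish_of_pos_entry
    (hP : IsSimplicialPoset P)
    (hinj : Function.Injective x) (hatom : ∀ i, IsAtom (x i))
    (hsurj : ∀ a : P, IsAtom a → ∃ i, x i = a)
    (ℓ : ℕ) (hℓ : 0 < ℓ) (α : Fin n → ℤ)
    (hα : ∀ i, -(ℓ : ℤ) ≤ α i) (hpos : ∃ j, 0 < α j) (t : ℕ) :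
    Subsingleton (ExtPiece P k n x ℓ t α) := by
  classical
  obtain ⟨j, hj⟩ := hpos
  rw [ExtPiece, Submodule.Quotient.subsingleton_iff, Submodule.eq_top_iff']
  intro z
  rw [Submodule.mem_comap, Submodule.subtype_apply]
  obtain ⟨f, hzf⟩ : ∃ f : KCochain P k n, (z : KCochain P k n) = f := ⟨z, rfl⟩
  rw [hzf]
  have hz : (z : KCochain P k n) ∈
      LinearMap.ker (koszulD P k n x ℓ) ⊓ gradedKC P k n x ℓ t α := z.2
  rw [Submodule.mem_inf, hzf] at hz
  have hker : koszulD P k n x ℓ f = 0 := LinearMap.mem_ker.1 hz.1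
  have hgr : ∀ G ∈ Set.univ, f G ∈
      (if G.card = t then facePiece P k n x (fun i => α i + if i ∈ G then (ℓ:ℤ) else 0)
       else ⊥) := Submodule.mem_pi.1 hz.2
  -- degree function
  set δ : Finset (Fin n) → (Fin n → ℤ) :=
    fun G => (fun i => α i + if i ∈ G then (ℓ : ℤ) else 0) with hδ
  have hft : ∀ G : Finset (Fin n), G.card ≠ t → f G = 0 := by
    intro G hG
    have := hgr G (Set.mem_univ G)
    rw [if_neg hG] at this
    simpa using this
  have hfp : ∀ G : Finset (Fin n), G.card = t → f G ∈ facePiece P k n x (δ G) := by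
    intro G hG
    have := hgr G (Set.mem_univ G)
    rw [if_pos hG] at this
    exact this
  have hβpos : ∀ G : Finset (Fin n), 1 ≤ δ G j := by
    intro G
    show 1 ≤ α j + if j ∈ G then (ℓ:ℤ) else 0
    split <;> omega
  -- choose preimages
  have hEx : ∀ H : Finset (Fin n), ∃ u, u ∈ facePiece P k n x (δ H) ∧
      (fv P k (x j)) ^ ℓ * u =
        (if j ∉ H ∧ H.card = t - 1 then f (insert j H) else 0) := by
    intro H
    by_cases hgood : j ∉ H ∧ H.card = t - 1
    · by_cases hc : (insert j H).card = t
      · have hmem := hfp _ hc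
        have hcong : facePiece P k n x (δ (insert j H)) =
            facePiece P k n x (fun l => δ H l + if l = j then (ℓ:ℤ) else 0) := by
          apply SPaux.facePiece_congr
          intro l
          show α l + (if l ∈ insert j H then (ℓ:ℤ) else 0) =
            (α l + if l ∈ H then (ℓ:ℤ) else 0) + if l = j then (ℓ:ℤ) else 0
          rcases eq_or_ne l j with rfl | hl
          · rw [if_pos (Finset.mem_insert_self l H), if_neg hgood.1, if_pos rfl]
            ring
          · rw [if_neg hl]
            by_cases hlH : l ∈ H
            · rw [if_pos (Finset.mem_insert_of_mem hlH), if_pos hlH]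
              ring
            · rw [if_neg (fun hc2 => by
                rcases Finset.mem_insert.1 hc2 with h | h
                · exact hl h
                · exact hlH h), if_neg hlH]
              ring
        rw [hcong] at hmem
        obtain ⟨u, hu, hu2⟩ := SPaux.pow_div hP hinj hatom hsurj (δ H) j (hβpos H) ℓ hmem
        rw [LinearMap.mulLeft_apply] at hu2
        exact ⟨u, hu, by rw [if_pos hgood, hu2]⟩
      · refine ⟨0, Submodule.zero_mem _, ?_⟩
        rw [if_pos hgood, hft _ hc, mul_zero]
    · exact ⟨0, Submodule.zero_mem _, by rw [if_neg hgood, mul_zero]⟩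
  choose u hu1 hu2 using hEx
  have hu00 : ∀ H : Finset (Fin n),
      (¬(j ∉ H ∧ H.card = t - 1) ∨ f (insert j H) = 0) → u H = 0 := by
    intro H hH
    apply SPaux.piece_inj hP hinj hatom hsurj (δ H) j (hβpos H) ℓ (hu1 H)
    rw [hu2 H]
    rcases hH with hH | hH
    · rw [if_neg hH]
    · split
      · exact hH
      · rfl
  set g : KCochain P k n :=
    fun H => ((-1 : k) ^ ((H.filter fun i => i < j).card)) • u H with hg
  have hggr : g ∈ gradedKC P k n x ℓ (t - 1) α := by
    rw [gradedKC, Submodule.mem_pi]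
    intro H _
    split
    · exact Submodule.smul_mem _ _ (hu1 H)
    · rename_i hc
      rw [Submodule.mem_bot]
      show ((-1 : k) ^ ((H.filter fun i => i < j).card)) • u H = 0
      rw [hu00 H (Or.inl (fun hh => hc hh.2)), smul_zero]
  refine ⟨g, hggr, ?_⟩
  funext G
  rw [SPaux.koszulD_apply]
  by_cases hGt : G.card = t
  · by_cases hjG : j ∈ G
    · -- case B
      rw [Finset.sum_eq_single_of_mem j hjG]
      · have hcond : ¬ j ∈ G.erase j ∧ (G.erase j).card = t - 1 :=
          ⟨Finset.notMem_erase j G, by rw [Finset.card_erase_of_mem hjG, hGt]⟩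
        have hv := hu2 (G.erase j)
        rw [if_pos ⟨hcond.1, hcond.2⟩, Finset.insert_erase hjG] at hv
        have hfilter : ((G.erase j).filter fun i => i < j) = (G.filter fun i => i < j) := by
          rw [Finset.filter_erase]
          apply Finset.erase_eq_of_notMem
          intro hc
          exact absurd (Finset.mem_filter.1 hc).2 (lt_irrefl j)
        show ((-1:k) ^ ((G.filter fun i => i < j).card)) •
          ((fv P k (x j)) ^ ℓ * (((-1:k) ^ (((G.erase j).filter fun i => i < j).card)) • u (G.erase j))) = f G
        rw [hfilter, mul_smul_comm, hv, smul_smul, ← pow_add]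
        rw [Even.neg_one_pow ⟨_, rfl⟩, one_smul]
      · intro i hiG hine
        show ((-1:k) ^ ((G.filter fun i' => i' < i).card)) •
          ((fv P k (x i)) ^ ℓ * (((-1:k) ^ (((G.erase i).filter fun i' => i' < j).card)) • u (G.erase i))) = 0
        rw [hu00 (G.erase i) (Or.inl (fun hh => hh.1 (Finset.mem_erase.2 ⟨hine.symm, hjG⟩))),
          smul_zero, mul_zero, smul_zero]
    · -- case C: the main computation
      have herase : ∀ i ∈ G, (insert j G).erase i = insert j (G.erase i) := by
        intro i hi
        exact SPaux.erase_insert_comm' (fun hc => hjG (hc ▸ hi))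
      have hsign : ∀ i ∈ G,
          ((-1:k) ^ ((G.filter fun i' => i' < i).card)) *
            ((-1:k) ^ (((G.erase i).filter fun i' => i' < j).card)) =
          -(((-1:k) ^ (((insert j G).filter fun i' => i' < j).card)) *
            ((-1:k) ^ (((insert j G).filter fun i' => i' < i).card))) := by
        intro i hi
        have hij : i ≠ j := fun hc => hjG (hc ▸ hi)
        have e1 : ((insert j G).filter fun i' => i' < j) = (G.filter fun i' => i' < j) := by
          rw [Finset.filter_insert, if_neg (lt_irrefl j)]
        have e3 : ((G.erase i).filter fun i' => i' < j) =
            (G.filter fun i' => i' < j).erase i := Finset.filter_erase _ _ _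
        rcases lt_or_gt_of_ne hij with hlt | hgt
        · have hmem : i ∈ (G.filter fun i' => i' < j) := Finset.mem_filter.2 ⟨hi, hlt⟩
          have hb : 1 ≤ (G.filter fun i' => i' < j).card := Finset.card_pos.2 ⟨i, hmem⟩
          have e4 : (((G.erase i).filter fun i' => i' < j)).card =
              (G.filter fun i' => i' < j).card - 1 := by
            rw [e3, Finset.card_erase_of_mem hmem]
          have e2 : ((insert j G).filter fun i' => i' < i) = (G.filter fun i' => i' < i) := by
            rw [Finset.filter_insert, if_neg (asymm hlt)]
          rw [e1, e2, e4]
          obtain ⟨b, hb'⟩ : ∃ b, (G.filter fun i' => i' < j).card = b + 1 :=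
            ⟨_, (Nat.succ_pred_eq_of_pos hb).symm⟩
          rw [hb']
          rw [Nat.add_sub_cancel, pow_succ]
          ring
        · have e4 : (((G.erase i).filter fun i' => i' < j)).card =
              (G.filter fun i' => i' < j).card := by
            rw [e3, Finset.erase_eq_of_notMem]
            intro hc
            exact absurd (Finset.mem_filter.1 hc).2 (asymm hgt)
          have e5 : ((insert j G).filter fun i' => i' < i).card =
              (G.filter fun i' => i' < i).card + 1 := by
            rw [Finset.filter_insert, if_pos hgt,
              Finset.card_insert_of_notMem (fun hc => hjG (Finset.mem_filter.1 hc).1)]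
          rw [e1, e4, e5, pow_succ]
          ring
      have hco : ((-1:k) ^ (((insert j G).filter fun i' => i' < j).card)) •
            ((fv P k (x j)) ^ ℓ * f G) +
          ∑ i ∈ G, ((-1:k) ^ (((insert j G).filter fun i' => i' < i).card)) •
            ((fv P k (x i)) ^ ℓ * f (insert j (G.erase i))) = 0 := by
        have h0 := congrFun hker (insert j G)
        rw [SPaux.koszulD_apply] at h0
        rw [Finset.sum_insert hjG, Finset.erase_insert hjG] at h0
        rw [Finset.sum_congr rfl (fun i hi => by rw [herase i hi])] at h0
        simpa using h0
      have hvi : ∀ i ∈ G, (fv P k (x j)) ^ ℓ * u (G.erase i) = f (insert j (G.erase i)) := by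
        intro i hi
        rw [hu2, if_pos ⟨fun hc => hjG (Finset.mem_of_mem_erase hc), by
          rw [Finset.card_erase_of_mem hi, hGt]⟩]
      have hSmem : (∑ i ∈ G, ((-1:k) ^ ((G.filter fun i' => i' < i).card)) •
          ((fv P k (x i)) ^ ℓ * g (G.erase i))) - f G ∈ facePiece P k n x (δ G) := by
        apply Submodule.sub_mem
        · apply Submodule.sum_mem
          intro i hi
          apply Submodule.smul_mem
          show (fv P k (x i)) ^ ℓ *
            (((-1:k) ^ (((G.erase i).filter fun i' => i' < j).card)) • u (G.erase i)) ∈ _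
          rw [mul_smul_comm]
          apply Submodule.smul_mem
          have hmm := SPaux.mul_piece hP hinj hatom hsurj (δ (G.erase i)) i ℓ (hu1 (G.erase i))
          rwa [SPaux.facePiece_congr (β' := δ G) (fun l => by
            show (α l + if l ∈ G.erase i then (ℓ:ℤ) else 0) + (if l = i then (ℓ:ℤ) else 0) =
              α l + if l ∈ G then (ℓ:ℤ) else 0
            rcases eq_or_ne l i with rfl | hl
            · rw [if_neg (fun hc => (Finset.mem_erase.1 hc).1 rfl), if_pos rfl, if_pos hi]
              ring
            · rw [if_neg hl]
              by_cases hlG : l ∈ G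
              · rw [if_pos (Finset.mem_erase.2 ⟨hl, hlG⟩), if_pos hlG]
                ring
              · rw [if_neg (fun hc => hlG (Finset.mem_of_mem_erase hc)), if_neg hlG]
                ring)] at hmm
        · exact hfp G hGt
      have hXS : (fv P k (x j)) ^ ℓ *
          (∑ i ∈ G, ((-1:k) ^ ((G.filter fun i' => i' < i).card)) •
            ((fv P k (x i)) ^ ℓ * g (G.erase i))) = (fv P k (x j)) ^ ℓ * f G := by
        rw [Finset.mul_sum]
        have hterm : ∀ i ∈ G,
            (fv P k (x j)) ^ ℓ * (((-1:k) ^ ((G.filter fun i' => i' < i).card)) •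
              ((fv P k (x i)) ^ ℓ * g (G.erase i))) =
            ((((-1:k) ^ ((G.filter fun i' => i' < i).card)) *
              ((-1:k) ^ (((G.erase i).filter fun i' => i' < j).card)))) •
              ((fv P k (x i)) ^ ℓ * f (insert j (G.erase i))) := by
          intro i hi
          show (fv P k (x j)) ^ ℓ * (((-1:k) ^ ((G.filter fun i' => i' < i).card)) •
              ((fv P k (x i)) ^ ℓ *
                (((-1:k) ^ (((G.erase i).filter fun i' => i' < j).card)) • u (G.erase i)))) = _
          rw [mul_smul_comm, mul_smul_comm, mul_smul_comm, smul_smul]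
          congr 1
          rw [mul_left_comm, hvi i hi]
        rw [Finset.sum_congr rfl hterm]
        rw [Finset.sum_congr rfl (fun i hi => by rw [hsign i hi])]
        have hpull : ∑ i ∈ G,
            (-(((-1:k) ^ (((insert j G).filter fun i' => i' < j).card)) *
              ((-1:k) ^ (((insert j G).filter fun i' => i' < i).card)))) •
              ((fv P k (x i)) ^ ℓ * f (insert j (G.erase i))) =
            -(((-1:k) ^ (((insert j G).filter fun i' => i' < j).card)) •
              ∑ i ∈ G, ((-1:k) ^ (((insert j G).filter fun i' => i' < i).card)) •
                ((fv P k (x i)) ^ ℓ * f (insert j (G.erase i)))) := by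
          rw [Finset.smul_sum, ← Finset.sum_neg_distrib]
          apply Finset.sum_congr rfl
          intro i hi
          rw [smul_smul, neg_smul]
        rw [hpull, eq_neg_of_add_eq_zero_right hco]
        rw [smul_neg, neg_neg, smul_smul, ← pow_add, Even.neg_one_pow ⟨_, rfl⟩, one_smul]
      have hT := SPaux.piece_inj hP hinj hatom hsurj (δ G) j (hβpos G) ℓ hSmem
        (by rw [mul_sub, hXS, sub_self])
      rw [sub_eq_zero] at hT
      exact hT
  · -- case A
    rw [hft G hGt]
    apply Finset.sum_eq_zero
    intro i hiG
    have hu0 : u (G.erase i) = 0 := by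
      apply hu00
      by_cases hcond : ¬ j ∈ G.erase i ∧ (G.erase i).card = t - 1
      · right
        apply hft
        rw [Finset.card_insert_of_notMem hcond.1, Finset.card_erase_of_mem hiG]
        have : 1 ≤ G.card := Finset.card_pos.2 ⟨i, hiG⟩
        omega
      · left
        exact hcond
    show ((-1:k) ^ ((G.filter fun i' => i' < i).card)) •
      ((fv P k (x i)) ^ ℓ * (((-1:k) ^ (((G.erase i).filter fun i' => i' < j).card)) • u (G.erase i))) = 0
    rw [hu0, smul_zero, mul_zero, smul_zero]


end
end
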